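/- arXiv:1705.00205 — 11 statements merged into one kernel-verified Lean document; each statement's English description precedes it below -/
import Mathlib

section
/- If p is a near ultrafilter on a G-flow X and A ⊆ X is a nonempty open set with A ∉ p, then there exists a symmetric open neighborhood V of the identity of G with VA ∉ p. -/
open Pointwise

/-- A near filter on the open sets of a `G`-flow `X`: a family of nonempty open
subsets such that finite intersections of `U`-thickenings of its members are
nonempty, for every symmetric open neighborhood `U` of the identity. -/
def IsNearFilter (G : Type*) {X : Type*} [Group G] [TopologicalSpace G]
    [TopologicalSpace X] [MulAction G X] (F : Set (Set X)) : Prop :=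
  (∀ A ∈ F, IsOpen A ∧ A.Nonempty) ∧
  ∀ s : Finset (Set X), s.Nonempty → ↑s ⊆ F →
    ∀ U : Set G, IsOpen U → (1 : G) ∈ U → U⁻¹ = U →
      (⋂ A ∈ s, U • A).Nonempty

/-- A near ultrafilter is a maximal near filter. -/
def IsNearUltrafilter (G : Type*) {X : Type*} [Group G] [TopologicalSpace G]
    [TopologicalSpace X] [MulAction G X] (F : Set (Set X)) : Prop :=
  IsNearFilter G F ∧ ∀ F' : Set (Set X), IsNearFilter G F' → F ⊆ F' → F' ⊆ F

/-- The space `S_G(X)` of near ultrafilters on `X`. -/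
def NearUltra (G X : Type*) [Group G] [TopologicalSpace G]
    [TopologicalSpace X] [MulAction G X] : Type _ :=
  {F : Set (Set X) // IsNearUltrafilter G F}

/-- The topology on `S_G(X)` generated by the sets `N_A = {p | A ∉ p}`
for `A` a nonempty open subset of `X`. -/
def nearTopology (G X : Type*) [Group G] [TopologicalSpace G]
    [TopologicalSpace X] [MulAction G X] : TopologicalSpace (NearUltra G X) :=
  TopologicalSpace.generateFrom
    {N | ∃ A : Set X, IsOpen A ∧ A.Nonempty ∧ N = {p : NearUltra G X | A ∉ p.1}}

/-- If A is not in p then VA is not in p for some symmetric open identity nbhd V. -/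
theorem exists_symm_nbhd_thickening_not_mem
    {G X : Type*} [Group G] [TopologicalSpace G] [IsTopologicalGroup G]
    [TopologicalSpace X] [CompactSpace X] [T2Space X]
    [MulAction G X] [ContinuousSMul G X]
    (p : NearUltra G X) (A : Set X) (hA : IsOpen A) (hAne : A.Nonempty)
    (hAp : A ∉ p.1) :
    ∃ V : Set G, IsOpen V ∧ (1 : G) ∈ V ∧ V⁻¹ = V ∧ V • A ∉ p.1 := by
  classical
  by_contra h
  push_neg at h
  obtain ⟨⟨hmem, hinter⟩, hmax⟩ := p.2
  set F' := insert A p.1 with hF'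
  have hNF : IsNearFilter G F' := by
    constructor
    · rintro B hB
      rcases hB with rfl | hB
      · exact ⟨hA, hAne⟩
      · exact hmem B hB
    · intro s hs hsF U hU h1U hUsym
      obtain ⟨W0, hW0open, hW01, hW0sub⟩ := exists_open_nhds_one_mul_subset (hU.mem_nhds h1U)
      set W := W0 ∩ W0⁻¹ with hW
      have hWopen : IsOpen W := hW0open.inter hW0open.inv
      have hW1 : (1 : G) ∈ W := ⟨hW01, by simpa using hW01⟩
      have hWsym : W⁻¹ = W := by
        ext g; simp [hW]; tauto
      have hWU : W * W ⊆ U :=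
        (Set.mul_subset_mul Set.inter_subset_left Set.inter_subset_left).trans hW0sub
      have hWsubU : W ⊆ U := fun g hg => by
        simpa using hWU (Set.mul_mem_mul hW1 hg)
      set t : Finset (Set X) := insert (W • A) (s.erase A) with ht
      have htp : ↑t ⊆ p.1 := by
        intro B hB
        simp only [ht, Finset.coe_insert, Set.mem_insert_iff, Finset.coe_erase,
          Set.mem_diff, Finset.mem_coe, Set.mem_singleton_iff] at hB
        rcases hB with rfl | ⟨hBs, hBne⟩
        · exact h W hWopen hW1 hWsym
        · rcases hsF hBs with rfl | hBp
          · exact absurd rfl hBne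
          · exact hBp
      obtain ⟨x, hx⟩ := hinter t ⟨_, Finset.mem_insert_self _ _⟩ htp W hWopen hW1 hWsym
      refine ⟨x, ?_⟩
      simp only [Set.mem_iInter] at hx ⊢
      intro B hB
      by_cases hBA : B = A
      · subst hBA
        have hxW : x ∈ W • W • B := hx (W • B) (Finset.mem_insert_self _ _)
        have h2 : W • W • B ⊆ U • B := by
          rw [← mul_smul]
          exact Set.smul_subset_smul_right hWU
        exact h2 hxW
      · have hBt : B ∈ t := Finset.mem_insert_of_mem (Finset.mem_erase.2 ⟨hBA, hB⟩)
        exact Set.smul_subset_smul_right hWsubU (hx B hBt)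
  have hsub : F' ⊆ p.1 := hmax F' hNF (Set.subset_insert _ _)
  exact hAp (hsub (Set.mem_insert _ _))
end

section
/- Let p be a near ultrafilter on a G-flow X, let A ⊆ X be open with A ∈ p, and let B₁,...,B_k ⊆ A be open sets whose union is dense in A. Then B_i ∈ p for some i ≤ k. -/
open Pointwise

/-- If A is in p and finitely many open sets contained in A have dense union
in A, then one of them is in p. -/
theorem mem_of_finite_dense_cover
    {G X : Type*} [Group G] [TopologicalSpace G] [IsTopologicalGroup G]
    [TopologicalSpace X] [CompactSpace X] [T2Space X]
    [MulAction G X] [ContinuousSMul G X]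
    (p : NearUltra G X) (A : Set X) (hA : IsOpen A) (hAp : A ∈ p.1)
    (s : Finset (Set X)) (hopen : ∀ B ∈ s, IsOpen B) (hsub : ∀ B ∈ s, B ⊆ A)
    (hdense : A ⊆ closure (⋃ B ∈ s, B)) :

    ∃ B ∈ s, B ∈ p.1 := by
  classical
  by_contra h
  push_neg at h
  obtain ⟨⟨hmem, hfin⟩, hmax⟩ := p.2
  have hAne : A.Nonempty := (hmem A hAp).2
  -- For every B ∈ s, extract witnesses to the failure of `insert B p.1` being a near filter
  have key : ∀ B ∈ s, ∃ (t : Finset (Set X)) (U : Set G),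
      ↑t ⊆ p.1 ∧ IsOpen U ∧ (1:G) ∈ U ∧ U⁻¹ = U ∧
      (U • B) ∩ (⋂ C ∈ t, U • C) = ∅ := by
    intro B hB
    by_cases hBne : B.Nonempty
    · have hnot : ¬ IsNearFilter G (insert B p.1) := by
        intro hNF
        exact h B hB (hmax _ hNF (Set.subset_insert _ _) (Set.mem_insert _ _))
      rw [IsNearFilter] at hnot
      push_neg at hnot
      have hfirst : ∀ C ∈ insert B p.1, IsOpen C ∧ C.Nonempty := by
        rintro C (rfl | hC)
        · exact ⟨hopen C hB, hBne⟩
        · exact hmem C hC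
      obtain ⟨s', hs'ne, hs'sub, U, hUo, hU1, hUsym, hUem⟩ := hnot hfirst
      refine ⟨s'.erase B, U, ?_, hUo, hU1, hUsym, ?_⟩
      · intro C hC
        simp only [Finset.coe_erase, Set.mem_diff, Set.mem_singleton_iff] at hC
        rcases hs'sub hC.1 with rfl | hCp
        · exact absurd rfl hC.2
        · exact hCp
      · rw [← Set.subset_empty_iff, ← hUem]
        intro x hx
        simp only [Set.mem_inter_iff, Set.mem_iInter] at hx ⊢
        intro C hC
        by_cases hCB : C = B
        · exact hCB ▸ hx.1
        · exact hx.2 C (Finset.mem_erase.mpr ⟨hCB, hC⟩)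
    · rw [Set.not_nonempty_iff_eq_empty] at hBne
      refine ⟨∅, Set.univ, by simp, isOpen_univ, trivial, Set.inv_univ, ?_⟩
      subst hBne
      simp [Set.smul_set_empty]
  choose! t U ht hUo hU1 hUsym hdisj using key
  -- the combined neighborhood and finite family
  set UU : Set G := ⋂ B ∈ s, U B with hUU
  have hUUo : IsOpen UU := isOpen_biInter_finset fun B hB => hUo B hB
  have hUU1 : (1:G) ∈ UU := Set.mem_iInter₂.mpr fun B hB => hU1 B hB
  have hUUsym : UU⁻¹ = UU := by
    rw [hUU]
    simp only [Set.iInter_inv]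
    exact Set.iInter₂_congr fun B hB => hUsym B hB
  have hUUsub : ∀ B ∈ s, UU ⊆ U B := fun B hB => Set.biInter_subset_of_mem hB
  set TT : Finset (Set X) := insert A (s.attach.biUnion fun B => t B.1) with hTT
  have hTTsub : ↑TT ⊆ p.1 := by
    intro C hC
    simp only [hTT, Finset.coe_insert, Set.mem_insert_iff, Finset.mem_coe,
      Finset.mem_biUnion, Finset.mem_attach, true_and] at hC
    rcases hC with rfl | ⟨⟨B, hB⟩, hCB⟩
    · exact hAp
    · exact ht B hB hCB
  have hTTopen : ∀ C ∈ TT, IsOpen C := fun C hC => (hmem C (hTTsub hC)).1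
  obtain ⟨x, hx⟩ := hfin TT ⟨A, Finset.mem_insert_self _ _⟩ hTTsub UU hUUo hUU1 hUUsym
  -- `x` lies in the closure of `UU • ⋃ B ∈ s, B`
  have hxA : x ∈ UU • A := by
    have := Set.mem_iInter₂.mp hx A (Finset.mem_insert_self _ _)
    exact this
  have hxcl : x ∈ closure (UU • ⋃ B ∈ s, (B : Set X)) := by
    obtain ⟨g, hg, a, ha, rfl⟩ := hxA
    have ha' : a ∈ closure (⋃ B ∈ s, (B : Set X)) := hdense ha
    have : g • a ∈ closure (g • ⋃ B ∈ s, (B : Set X)) := by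
      rw [closure_smul]
      exact Set.smul_mem_smul_set ha'
    refine closure_mono ?_ this
    exact Set.smul_set_subset_smul hg
  -- the open set `⋂ C ∈ TT, UU • C` contains `x`, so it meets `UU • ⋃ B`
  have hWopen : IsOpen (⋂ C ∈ TT, UU • C) :=
    isOpen_biInter_finset fun C hC => IsOpen.smul_left (hTTopen C hC)
  obtain ⟨y, hyW, hyU⟩ := (mem_closure_iff.mp hxcl) _ hWopen hx
  -- find which `B` the point `y` belongs to
  rw [show (UU • ⋃ B ∈ s, (B : Set X)) = ⋃ B ∈ s, UU • B by
    simp only [Set.smul_iUnion₂]] at hyU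
  obtain ⟨B, hB, hyB⟩ := Set.mem_iUnion₂.mp hyU
  -- contradiction with `hdisj B`
  have hyt : y ∈ ⋂ C ∈ t B, (U B) • C := by
    rw [Set.mem_iInter₂]
    intro C hC
    have hCT : C ∈ TT := by
      simp only [hTT, Finset.mem_insert, Finset.mem_biUnion, Finset.mem_attach, true_and]
      exact Or.inr ⟨⟨B, hB⟩, hC⟩
    exact Set.smul_subset_smul_right (hUUsub B hB) (Set.mem_iInter₂.mp hyW C hCT)
  have : y ∈ (U B • B) ∩ ⋂ C ∈ t B, (U B) • C :=
    ⟨Set.smul_subset_smul_right (hUUsub B hB) hyB, hyt⟩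
  rw [hdisj B hB] at this
  exact this
end

section
/- The space S_G(X) of near ultrafilters on a G-flow X, topologized by declaring the sets N_A = {p : A ∉ p} (for A a nonempty open subset of X) to be a basis of open sets, is a Hausdorff topological space. -/
open Pointwise

open Pointwise

section Aux

variable {G X : Type*} [Group G] [TopologicalSpace G] [IsTopologicalGroup G]
  [TopologicalSpace X] [MulAction G X] [ContinuousSMul G X]

lemma nearAux_subset_smul {V : Set G} (hV : (1:G) ∈ V) {A : Set X} : A ⊆ V • A :=
  fun a ha => ⟨1, hV, a, ha, one_smul _ _⟩

lemma nearAux_smul_mono {V U : Set G} (h : V ⊆ U) {A : Set X} : V • A ⊆ U • A := by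
  rintro x ⟨v, hv, a, ha, rfl⟩; exact ⟨v, h hv, a, ha, rfl⟩

/-- A dense open set belongs to every near ultrafilter. -/
lemma nearAux_dense_mem [Nonempty X] {F : Set (Set X)} (hF : IsNearUltrafilter G F)
    {W : Set X} (hWo : IsOpen W) (hWd : Dense W) : W ∈ F := by
  classical
  refine hF.2 (insert W F) ?_ (Set.subset_insert _ _) (Set.mem_insert _ _)
  constructor
  · rintro A (rfl | hA)
    · exact ⟨hWo, hWd.nonempty⟩
    · exact hF.1.1 A hA
  · intro s hs hsub U hUo hU1 hUsymm
    set t := s.erase W with ht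
    have htF : ↑t ⊆ F := by
      intro B hB
      simp only [ht, Finset.coe_erase, Set.mem_diff, Set.mem_singleton_iff] at hB
      rcases hsub hB.1 with rfl | h
      · exact absurd rfl hB.2
      · exact h
    have key : ∃ x, x ∈ (⋂ B ∈ t, U • B) ∧ x ∈ W := by
      rcases t.eq_empty_or_nonempty with hte | htne
      · obtain ⟨x, hx⟩ := hWd.nonempty
        exact ⟨x, by simp [hte], hx⟩
      · have hEne := hF.1.2 t htne htF U hUo hU1 hUsymm
        have hEo : IsOpen (⋂ B ∈ t, U • B) := by
          refine isOpen_biInter_finset fun B hB => ?_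
          exact IsOpen.smul_left (hF.1.1 B (htF hB)).1
        obtain ⟨x, hx1, hx2⟩ := hWd.inter_open_nonempty _ hEo hEne
        exact ⟨x, hx1, hx2⟩
    obtain ⟨x, hxt, hxW⟩ := key
    refine ⟨x, Set.mem_iInter₂.2 fun B hB => ?_⟩
    rcases eq_or_ne B W with rfl | hne
    · exact nearAux_subset_smul hU1 hxW
    · exact Set.mem_iInter₂.1 hxt B (Finset.mem_erase.2 ⟨hne, hB⟩)

/-- If two open sets have dense union, every near ultrafilter contains one of them. -/
lemma nearAux_dichotomy [Nonempty X] {F : Set (Set X)} (hF : IsNearUltrafilter G F)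
    {W₁ W₂ : Set X} (h₁ : IsOpen W₁) (h₂ : IsOpen W₂) (hd : Dense (W₁ ∪ W₂)) :
    W₁ ∈ F ∨ W₂ ∈ F := by
  classical
  by_contra hc
  push_neg at hc
  obtain ⟨hW₁, hW₂⟩ := hc
  rcases W₁.eq_empty_or_nonempty with rfl | hW₁ne
  · exact hW₂ (nearAux_dense_mem hF h₂ (by simpa using hd))
  rcases W₂.eq_empty_or_nonempty with rfl | hW₂ne
  · exact hW₁ (nearAux_dense_mem hF h₁ (by simpa using hd))
  -- insert Wᵢ F fails to be a near filter
  have hbad : ∀ (W : Set X), IsOpen W → W.Nonempty → W ∉ F →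
      ∃ s : Finset (Set X), s.Nonempty ∧ ↑s ⊆ insert W F ∧ W ∈ s ∧
        ∃ U : Set G, IsOpen U ∧ (1:G) ∈ U ∧ U⁻¹ = U ∧ (⋂ A ∈ s, U • A) = ∅ := by
    intro W hWo hWne hWF
    have hnf : ¬ IsNearFilter G (insert W F) := fun h =>
      hWF (hF.2 _ h (Set.subset_insert _ _) (Set.mem_insert _ _))
    have hfirst : ∀ A ∈ insert W F, IsOpen A ∧ A.Nonempty := by
      rintro A (rfl | hA)
      · exact ⟨hWo, hWne⟩
      · exact hF.1.1 A hA
    have hsec : ¬ ∀ s : Finset (Set X), s.Nonempty → ↑s ⊆ insert W F →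
        ∀ U : Set G, IsOpen U → (1 : G) ∈ U → U⁻¹ = U → (⋂ A ∈ s, U • A).Nonempty :=
      fun h => hnf ⟨hfirst, h⟩
    push_neg at hsec
    obtain ⟨s, hsne, hssub, U, hUo, hU1, hUs, hemp⟩ := hsec

    have hWs : W ∈ s := by
      by_contra hWs
      have hsF : ↑s ⊆ F := by
        intro B hB
        rcases hssub hB with rfl | h
        · exact absurd hB hWs
        · exact h
      exact absurd (hF.1.2 s hsne hsF U hUo hU1 hUs) (by rw [hemp]; simp)
    exact ⟨s, hsne, hssub, hWs, U, hUo, hU1, hUs, hemp⟩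
  obtain ⟨s₁, hs₁ne, hs₁sub, hW₁s₁, U₁, hU₁o, hU₁1, hU₁s, h₁emp⟩ := hbad W₁ h₁ hW₁ne hW₁
  obtain ⟨s₂, hs₂ne, hs₂sub, hW₂s₂, U₂, hU₂o, hU₂1, hU₂s, h₂emp⟩ := hbad W₂ h₂ hW₂ne hW₂
  set U := U₁ ∩ U₂ with hU
  have hUo : IsOpen U := hU₁o.inter hU₂o
  have hU1 : (1:G) ∈ U := ⟨hU₁1, hU₂1⟩
  have hUsymm : U⁻¹ = U := by rw [hU, Set.inter_inv, hU₁s, hU₂s]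
  set t := ((s₁ ∪ s₂).erase W₁).erase W₂ with ht
  have htF : ↑t ⊆ F := by
    intro B hB
    have hB2 := Finset.mem_erase.1 hB
    have hB1 := Finset.mem_erase.1 hB2.2
    rcases Finset.mem_union.1 hB1.2 with h | h
    · rcases hs₁sub h with rfl | hh
      · exact absurd rfl hB1.1
      · exact hh
    · rcases hs₂sub h with rfl | hh
      · exact absurd rfl hB2.1
      · exact hh
  have hE : ∃ x, x ∈ (⋂ B ∈ t, U • B) ∧ x ∈ W₁ ∪ W₂ := by
    rcases t.eq_empty_or_nonempty with hte | htne
    · obtain ⟨x, hx⟩ := hW₁ne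
      exact ⟨x, by simp [hte], Or.inl hx⟩
    · have hEne := hF.1.2 t htne htF U hUo hU1 hUsymm
      have hEo : IsOpen (⋂ B ∈ t, U • B) :=
        isOpen_biInter_finset fun B hB => IsOpen.smul_left (hF.1.1 B (htF hB)).1
      obtain ⟨x, hx1, hx2⟩ := hd.inter_open_nonempty _ hEo hEne
      exact ⟨x, hx1, hx2⟩
  obtain ⟨x, hxt, hxW⟩ := hE
  have main : ∀ (W : Set X) (s : Finset (Set X)), ↑s ⊆ insert W F → s ⊆ s₁ ∪ s₂ →
      ∀ (U' : Set G), U ⊆ U' → x ∈ W → (1:G) ∈ U' → x ∈ ⋂ A ∈ s, U' • A := by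
    intro W s hssub hsub12 U' hUU' hxW hU'1
    refine Set.mem_iInter₂.2 fun B hB => ?_
    rcases eq_or_ne B W with rfl | hne
    · exact nearAux_subset_smul hU'1 hxW
    · have hBF : B ∈ F := by
        rcases hssub hB with rfl | h
        · exact absurd rfl hne
        · exact h
      have hBt : B ∈ t := by
        refine Finset.mem_erase.2 ⟨?_, Finset.mem_erase.2 ⟨?_, ?_⟩⟩
        · rintro rfl; exact hW₂ hBF
        · rintro rfl; exact hW₁ hBF
        · exact hsub12 hB
      exact nearAux_smul_mono hUU' (Set.mem_iInter₂.1 hxt B hBt)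
  rcases hxW with hx1 | hx2
  · have := main W₁ s₁ hs₁sub Finset.subset_union_left U₁ Set.inter_subset_left hx1 hU₁1
    rw [h₁emp] at this; exact this
  · have := main W₂ s₂ hs₂sub Finset.subset_union_right U₂ Set.inter_subset_right hx2 hU₂1
    rw [h₂emp] at this; exact this

end Aux

section Main

variable {G X : Type*} [Group G] [TopologicalSpace G] [IsTopologicalGroup G]
  [TopologicalSpace X] [MulAction G X] [ContinuousSMul G X]

/-- Separation: if `A ∈ p` and `A ∉ q`, there are disjoint basic open sets. -/
lemma nearAux_sep (p q : NearUltra G X) {A : Set X} (hAp : A ∈ p.1) (hAq : A ∉ q.1) :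
    ∃ u v : Set (NearUltra G X),
      (∃ B : Set X, IsOpen B ∧ B.Nonempty ∧ u = {r : NearUltra G X | B ∉ r.1}) ∧
      (∃ B : Set X, IsOpen B ∧ B.Nonempty ∧ v = {r : NearUltra G X | B ∉ r.1}) ∧
      p ∈ u ∧ q ∈ v ∧ Disjoint u v := by
  classical
  obtain ⟨hAo, hAne⟩ := p.2.1.1 A hAp
  have : Nonempty X := ⟨hAne.choose⟩
  -- get the witnessing failure of `insert A q.1`
  have hnf : ¬ IsNearFilter G (insert A q.1) := fun h =>
    hAq (q.2.2 _ h (Set.subset_insert _ _) (Set.mem_insert _ _))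
  have hfirst : ∀ B ∈ insert A q.1, IsOpen B ∧ B.Nonempty := by
    rintro B (rfl | hB)
    · exact ⟨hAo, hAne⟩
    · exact q.2.1.1 B hB
  have hsec : ¬ ∀ s : Finset (Set X), s.Nonempty → ↑s ⊆ insert A q.1 →
      ∀ U : Set G, IsOpen U → (1 : G) ∈ U → U⁻¹ = U → (⋂ B ∈ s, U • B).Nonempty :=
    fun h => hnf ⟨hfirst, h⟩
  push_neg at hsec
  obtain ⟨s, hsne, hssub, U₀, hU₀o, hU₀1, hU₀s, hemp⟩ := hsec
  set t := s.erase A with htdef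
  have htq : ↑t ⊆ q.1 := by
    intro B hB
    have h := Finset.mem_erase.1 hB
    rcases hssub h.2 with rfl | hh
    · exact absurd rfl h.1
    · exact hh
  -- choose a symmetric open V with V * V ⊆ U₀
  obtain ⟨V₀, hV₀o, hV₀1, hV₀U⟩ :=
    exists_open_nhds_one_mul_subset (hU₀o.mem_nhds hU₀1)
  set V := V₀ ∩ V₀⁻¹ with hVdef
  have hVo : IsOpen V := hV₀o.inter hV₀o.inv
  have hV1 : (1:G) ∈ V := ⟨hV₀1, by simpa using hV₀1⟩
  have hVs : V⁻¹ = V := by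
    rw [hVdef, Set.inter_inv, inv_inv, Set.inter_comm]
  have hVV : ∀ v v' : G, v ∈ V → v' ∈ V → v * v' ∈ U₀ := fun v v' hv hv' =>
    hV₀U (Set.mul_mem_mul hv.1 hv'.1)
  set W₂ : Set X := V • A with hW₂def
  have hW₂o : IsOpen W₂ := IsOpen.smul_left hAo
  have hW₂ne : W₂.Nonempty := hAne.mono (nearAux_subset_smul hV1)
  set W₁ : Set X := (closure W₂)ᶜ with hW₁def
  have hW₁o : IsOpen W₁ := isClosed_closure.isOpen_compl
  -- W₂ ∉ q
  have hW₂q : W₂ ∉ q.1 := by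
    intro hmem
    have hVU : V ⊆ U₀ := fun v hv => by
      simpa using hVV v 1 hv hV1
    have := q.2.1.2 (insert W₂ t) ⟨W₂, Finset.mem_insert_self _ _⟩
      (by
        intro B hB
        rcases Finset.mem_insert.1 hB with rfl | h
        · exact hmem
        · exact htq h) V hVo hV1 hVs
    obtain ⟨x, hx⟩ := this
    have hx' : x ∈ ⋂ B ∈ s, U₀ • B := by
      refine Set.mem_iInter₂.2 fun B hB => ?_
      rcases eq_or_ne B A with rfl | hne
      · -- x ∈ V • W₂ = V • (V • A) ⊆ U₀ • A
        have hxW₂ : x ∈ V • W₂ :=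
          Set.mem_iInter₂.1 hx W₂ (Finset.mem_insert_self _ _)
        obtain ⟨v, hv, y, hy, rfl⟩ := hxW₂
        obtain ⟨v', hv', a, ha, rfl⟩ := hy
        exact ⟨v * v', hVV v v' hv hv', a, ha, (smul_smul v v' a).symm⟩
      · have hBt : B ∈ t := Finset.mem_erase.2 ⟨hne, hB⟩
        exact nearAux_smul_mono hVU
          (Set.mem_iInter₂.1 hx B (Finset.mem_insert_of_mem hBt))
    rw [hemp] at hx'
    exact hx'
  -- W₁ ∉ p
  have hW₁p : W₁ ∉ p.1 := by
    intro hmem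
    obtain ⟨V₁, hV₁o, hV₁1, hV₁V⟩ :=
      exists_open_nhds_one_mul_subset (hVo.mem_nhds hV1)
    set V' := V₁ ∩ V₁⁻¹ with hV'def
    have hV'o : IsOpen V' := hV₁o.inter hV₁o.inv
    have hV'1 : (1:G) ∈ V' := ⟨hV₁1, by simpa using hV₁1⟩
    have hV's : V'⁻¹ = V' := by rw [hV'def, Set.inter_inv, inv_inv, Set.inter_comm]
    have := p.2.1.2 ({A, W₁} : Finset (Set X)) ⟨A, by simp⟩
      (by
        intro B hB
        simp only [Finset.coe_insert, Finset.coe_singleton, Set.mem_insert_iff,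
          Set.mem_singleton_iff] at hB
        rcases hB with rfl | rfl
        · exact hAp
        · exact hmem) V' hV'o hV'1 hV's
    obtain ⟨x, hx⟩ := this
    have hxA : x ∈ V' • A := Set.mem_iInter₂.1 hx A (by simp)
    have hxW₁ : x ∈ V' • W₁ := Set.mem_iInter₂.1 hx W₁ (by simp)
    obtain ⟨v, hv, a, ha, hva⟩ := hxA
    obtain ⟨v', hv', w, hw, hv'w⟩ := hxW₁
    have hw' : w ∈ V • A := by
      refine ⟨v'⁻¹ * v, ?_, a, ha, ?_⟩
      · have hv'i : v'⁻¹ ∈ V' := by rw [← hV's]; simpa using hv'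
        exact hV₁V (Set.mul_mem_mul hv'i.1 hv.1)
      · show (v'⁻¹ * v) • a = w
        have hva' : v • a = x := hva
        have hv'w' : v' • w = x := hv'w
        rw [mul_smul, hva', ← hv'w', inv_smul_smul]
    exact hw (subset_closure hw')
  -- W₁ ∪ W₂ is dense
  have hdense : Dense (W₁ ∪ W₂) := by
    intro x
    rw [mem_closure_iff]
    intro N hNo hxN
    rcases (N ∩ W₂).eq_empty_or_nonempty with hNE | hNE
    · have hsubc : W₂ ⊆ Nᶜ := fun y hy => fun hyN =>
        Set.eq_empty_iff_forall_notMem.1 hNE y ⟨hyN, hy⟩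
      have : closure W₂ ⊆ Nᶜ := closure_minimal hsubc hNo.isClosed_compl
      exact ⟨x, hxN, Or.inl fun hc => this hc hxN⟩
    · obtain ⟨y, hyN, hyW⟩ := hNE
      exact ⟨y, hyN, Or.inr hyW⟩
  -- W₁ is nonempty
  have hW₁ne : W₁.Nonempty := by
    rcases W₁.eq_empty_or_nonempty with h | h
    · exfalso
      apply hW₂q
      refine nearAux_dense_mem q.2 hW₂o ?_
      have : closure W₂ = Set.univ := by
        have := congrArg compl h
        rwa [hW₁def, compl_compl, Set.compl_empty] at this
      rw [Dense]; simp [this]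
    · exact h
  refine ⟨{r : NearUltra G X | W₁ ∉ r.1}, {r : NearUltra G X | W₂ ∉ r.1},
    ⟨W₁, hW₁o, hW₁ne, rfl⟩, ⟨W₂, hW₂o, hW₂ne, rfl⟩, hW₁p, hW₂q, ?_⟩
  rw [Set.disjoint_left]
  intro r hr1 hr2
  rcases nearAux_dichotomy r.2 hW₁o hW₂o hdense with h | h
  · exact hr1 h
  · exact hr2 h

end Main

/-- The space of near ultrafilters is Hausdorff. -/
theorem nearUltra_t2
    {G X : Type*} [Group G] [TopologicalSpace G] [IsTopologicalGroup G]
    [TopologicalSpace X] [CompactSpace X] [T2Space X]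
    [MulAction G X] [ContinuousSMul G X] :
    @T2Space (NearUltra G X) (nearTopology G X) := by
  letI : TopologicalSpace (NearUltra G X) := nearTopology G X
  refine ⟨fun p q hpq => ?_⟩
  have hne : p.1 ≠ q.1 := fun h => hpq (Subtype.ext h)
  have key : ∃ A : Set X, (A ∈ p.1 ∧ A ∉ q.1) ∨ (A ∈ q.1 ∧ A ∉ p.1) := by
    by_contra hc
    push_neg at hc
    apply hne
    ext A
    exact ⟨fun h => (hc A).1 h, fun h => (hc A).2 h⟩
  obtain ⟨A, hA | hA⟩ := key
  · obtain ⟨u, v, hu, hv, hpu, hqv, hd⟩ := nearAux_sep p q hA.1 hA.2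
    exact ⟨u, v, TopologicalSpace.GenerateOpen.basic _ hu,
      TopologicalSpace.GenerateOpen.basic _ hv, hpu, hqv, hd⟩
  · obtain ⟨u, v, hu, hv, hqu, hpv, hd⟩ := nearAux_sep q p hA.1 hA.2
    exact ⟨v, u, TopologicalSpace.GenerateOpen.basic _ hv,
      TopologicalSpace.GenerateOpen.basic _ hu, hpv, hqu, hd.symm⟩
end

section
/- The action of G on S_G(X), defined by A ∈ gp iff g⁻¹A ∈ p, is jointly continuous: the map G × S_G(X) → S_G(X) is continuous. -/
open Pointwise

/-- Near ultrafilters are upward closed (among open sets). -/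
lemma IsNearUltrafilter.mem_of_subset {G X : Type*} [Group G] [TopologicalSpace G]
    [TopologicalSpace X] [MulAction G X] {F : Set (Set X)}
    (hF : IsNearUltrafilter G F) {E C : Set X} (hE : E ∈ F) (hC : IsOpen C)
    (hEC : E ⊆ C) : C ∈ F := by
  classical
  apply hF.2 (insert C F) _ (Set.subset_insert _ _) (Set.mem_insert _ _)
  constructor
  · rintro A (rfl | hA)
    · exact ⟨hC, ((hF.1.1 E hE).2).mono hEC⟩
    · exact hF.1.1 A hA
  · intro s hs hsF U hU h1 hUsym
    by_cases hCs : C ∈ s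
    · have hsub : ↑(insert E (s.erase C)) ⊆ F := by
        intro A hA
        simp only [Finset.coe_insert, Set.mem_insert_iff, Finset.coe_erase,
          Set.mem_diff] at hA
        rcases hA with rfl | ⟨hA, hAC⟩
        · exact hE
        · rcases hsF hA with rfl | h
          · exact absurd rfl hAC
          · exact h
      obtain ⟨x, hx⟩ := hF.1.2 (insert E (s.erase C))
        ⟨E, Finset.mem_insert_self _ _⟩ hsub U hU h1 hUsym
      simp only [Set.mem_iInter] at hx
      refine ⟨x, ?_⟩
      simp only [Set.mem_iInter]
      intro A hA
      by_cases hAC : A = C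
      · subst hAC
        exact Set.smul_subset_smul_left hEC (hx E (Finset.mem_insert_self _ _))
      · exact hx A (Finset.mem_insert_of_mem (Finset.mem_erase.2 ⟨hAC, hA⟩))
    · have hsub : ↑s ⊆ F := by
        intro A hA
        rcases hsF hA with rfl | h
        · exact absurd hA hCs
        · exact h
      exact hF.1.2 s hs hsub U hU h1 hUsym

/-- Witness for non-membership in a near ultrafilter. -/
lemma IsNearUltrafilter.exists_witness {G X : Type*} [Group G] [TopologicalSpace G]
    [TopologicalSpace X] [MulAction G X] {F : Set (Set X)}
    (hF : IsNearUltrafilter G F) {D : Set X} (hDo : IsOpen D) (hDne : D.Nonempty)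
    (hD : D ∉ F) :
    ∃ s : Finset (Set X), ↑s ⊆ F ∧ ∃ U : Set G, IsOpen U ∧ (1 : G) ∈ U ∧ U⁻¹ = U ∧
      (U • D) ∩ ⋂ A ∈ s, U • A = ∅ := by
  classical
  by_contra h
  push_neg at h
  apply hD
  apply hF.2 (insert D F) _ (Set.subset_insert _ _) (Set.mem_insert _ _)
  constructor
  · rintro A (rfl | hA)
    · exact ⟨hDo, hDne⟩
    · exact hF.1.1 A hA
  · intro s hs hsF U hU h1 hUsym
    by_cases hDs : D ∈ s
    · have hsub : ↑(s.erase D) ⊆ F := by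
        intro A hA
        simp only [Finset.coe_erase, Set.mem_diff] at hA
        rcases hsF hA.1 with rfl | hh
        · exact absurd rfl hA.2
        · exact hh
      have hne := h (s.erase D) hsub U hU h1 hUsym
      have : (⋂ A ∈ s, U • A) = (U • D) ∩ ⋂ A ∈ s.erase D, U • A := by
        conv_lhs => rw [← Finset.insert_erase hDs]
        rw [Finset.set_biInter_insert]
      rw [this]
      exact hne
    · have hsub : ↑s ⊆ F := by
        intro A hA
        rcases hsF hA with rfl | hh
        · exact absurd hA hDs
        · exact hh
      exact hF.1.2 s hs hsub U hU h1 hUsym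

/-- The action of G on the space of near ultrafilters is jointly continuous. -/
theorem nearUltra_action_continuous
    {G X : Type*} [Group G] [TopologicalSpace G] [IsTopologicalGroup G]
    [TopologicalSpace X] [CompactSpace X] [T2Space X]
    [MulAction G X] [ContinuousSMul G X]
    (hact : ∀ (g : G) (p : NearUltra G X),
      IsNearUltrafilter G {A : Set X | g⁻¹ • A ∈ p.1}) :
    @Continuous (G × NearUltra G X) (NearUltra G X)
      (@instTopologicalSpaceProd _ _ _ (nearTopology G X)) (nearTopology G X)
      (fun q => ⟨{A : Set X | q.1⁻¹ • A ∈ q.2.1}, hact q.1 q.2⟩) := by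
  classical
  letI : TopologicalSpace (NearUltra G X) := nearTopology G X
  unfold nearTopology
  refine continuous_generateFrom_iff.2 ?_
  rintro N ⟨A, hAo, hAne, rfl⟩
  rw [isOpen_prod_iff]
  rintro g p hgp
  change g⁻¹ • A ∉ p.1 at hgp
  -- hgp : g⁻¹ • A ∉ p.1
  set D : Set X := g⁻¹ • A with hDdef
  have hDo : IsOpen D := hAo.smul g⁻¹
  have hDne : D.Nonempty := hAne.smul_set
  obtain ⟨s₀, hs₀F, U, hUo, hU1, hUsym, hempty⟩ := p.2.exists_witness hDo hDne hgp
  obtain ⟨W, hWo, hW1, hWW⟩ :=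
    exists_open_nhds_one_mul_subset (hUo.mem_nhds hU1)
  set V : Set G := W ∩ W⁻¹ with hVdef
  have hVo : IsOpen V := hWo.inter hWo.inv
  have hV1 : (1 : G) ∈ V := ⟨hW1, by simp [hW1]⟩
  have hVsym : V⁻¹ = V := by
    ext x
    simp only [hVdef, Set.mem_inv, Set.mem_inter_iff, inv_inv]
    tauto
  have hVW : V ⊆ W := Set.inter_subset_left
  have hVU : V ⊆ U := fun v hv => by simpa using hWW (Set.mul_mem_mul (hVW hv) hW1)
  set C : Set X := V • D with hCdef
  have hCo : IsOpen C := by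
    rw [hCdef, ← Set.iUnion_smul_set]
    exact isOpen_biUnion fun v _ => hDo.smul v
  have hCne : C.Nonempty := by
    obtain ⟨d, hd⟩ := hDne
    exact ⟨(1 : G) • d, Set.smul_mem_smul hV1 hd⟩
  -- C ∉ p.1
  have hCp : C ∉ p.1 := by
    intro hCp
    obtain ⟨x, hx⟩ := p.2.1.2 (insert C s₀) ⟨C, Finset.mem_insert_self _ _⟩
      (by
        intro B hB
        simp only [Finset.coe_insert, Set.mem_insert_iff] at hB
        rcases hB with rfl | hB
        · exact hCp
        · exact hs₀F hB) V hVo hV1 hVsym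
    simp only [Finset.set_biInter_insert, Set.mem_inter_iff, Set.mem_iInter] at hx
    have hx1 : x ∈ U • D := by
      obtain ⟨v, hv, y, hy, rfl⟩ := hx.1
      obtain ⟨w, hw, d, hd, rfl⟩ := hy
      exact ⟨v * w, hWW (Set.mul_mem_mul (hVW hv) (hVW hw)), d, hd, mul_smul v w d⟩
    have hx2 : x ∈ ⋂ B ∈ s₀, U • B := by
      simp only [Set.mem_iInter]
      intro B hB
      exact Set.smul_subset_smul_right hVU (hx.2 B hB)
    exact absurd (Set.mem_inter hx1 hx2) (by rw [hempty]; exact Set.notMem_empty x)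
  refine ⟨g • V, {q : NearUltra G X | C ∉ q.1}, (hVo.smul g), ?_, ?_, hCp, ?_⟩
  · exact TopologicalSpace.isOpen_generateFrom_of_mem ⟨C, hCo, hCne, rfl⟩
  · exact ⟨1, hV1, mul_one g⟩
  · rintro ⟨g', p'⟩ ⟨hg', hp'⟩
    change C ∉ p'.1 at hp'
    obtain ⟨v, hv, rfl⟩ := hg'
    show (g • v)⁻¹ • A ∉ p'.1
    intro hmem
    have hsub : (g • v)⁻¹ • A ⊆ C := by
      have : (g • v)⁻¹ • A = v⁻¹ • D := by
        rw [smul_eq_mul, mul_inv_rev, mul_smul, hDdef]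
      rw [this]
      intro x hx
      obtain ⟨y, hy, rfl⟩ := hx
      exact Set.smul_mem_smul (by rw [← hVsym]; exact Set.inv_mem_inv.2 hv) hy
    exact hp' (p'.2.mem_of_subset hmem hCo hsub)
end

section
/- Suppose there exist nonempty open sets {A_n : n < ω} in X and a symmetric open neighborhood V of the identity of G such that the sets VA_n are pairwise disjoint. Then S_G(X) is not metrizable. (In particular, there is a closed subspace of S_G(X) admitting a continuous surjection onto βω.) -/
open Pointwise
open Filter Topology

section Helpers

variable {G X : Type*} [Group G] [TopologicalSpace G] [TopologicalSpace X] [MulAction G X]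

/-- a finite subset of the union of a chain lies in one member -/
lemma chain_finset_subset {α : Type*} {c : Set (Set α)} (hchain : IsChain (· ⊆ ·) c)
    (hcne : c.Nonempty) (s : Finset α) (hsub : ↑s ⊆ ⋃₀ c) : ∃ F ∈ c, ↑s ⊆ F := by
  classical
  induction s using Finset.induction with
  | empty => exact ⟨hcne.choose, hcne.choose_spec, by simp⟩
  | @insert a s ha ih =>
    obtain ⟨F₁, hF₁c, hsF₁⟩ := ih (fun x hx => hsub (by simp [hx]))
    obtain ⟨F₂, hF₂c, haF₂⟩ : ∃ F ∈ c, a ∈ F := by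
      have := hsub (show a ∈ (↑(insert a s) : Set α) by simp)
      simpa [Set.mem_sUnion] using this
    rcases hchain.total hF₁c hF₂c with h | h
    · exact ⟨F₂, hF₂c, by
        intro x hx
        rcases Finset.mem_insert.mp (by exact_mod_cast hx) with rfl | hx'
        · exact haF₂
        · exact h (hsF₁ hx')⟩
    · exact ⟨F₁, hF₁c, by
        intro x hx
        rcases Finset.mem_insert.mp (by exact_mod_cast hx) with rfl | hx'
        · exact h haF₂
        · exact hsF₁ hx'⟩

lemma exists_nearUltra (F : Set (Set X)) (hF : IsNearFilter G F) :
    ∃ p : Set (Set X), IsNearUltrafilter G p ∧ F ⊆ p := by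
  have hzorn : ∀ c ⊆ {F' : Set (Set X) | IsNearFilter G F'}, IsChain (· ⊆ ·) c → c.Nonempty →
      ∃ ub ∈ {F' : Set (Set X) | IsNearFilter G F'}, ∀ s ∈ c, s ⊆ ub := by
    intro c hcS hchain hcne
    refine ⟨⋃₀ c, ⟨?_, ?_⟩, fun s hs => Set.subset_sUnion_of_mem hs⟩
    · rintro A ⟨F', hF'c, hAF'⟩
      exact (hcS hF'c).1 A hAF'
    · intro s hs hsub U hUo hU1 hUs
      obtain ⟨F', hF'c, hsF'⟩ := chain_finset_subset hchain hcne s hsub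
      exact (hcS hF'c).2 s hs hsF' U hUo hU1 hUs
  obtain ⟨m, hFm, hm⟩ := zorn_subset_nonempty _ hzorn F hF
  exact ⟨m, ⟨hm.1, fun F' hF' hmF' => hm.2 hF' hmF'⟩, hFm⟩

lemma IsNearUltrafilter.mem_of_superset {p : Set (Set X)} (hp : IsNearUltrafilter G p)
    {A B : Set X} (hAp : A ∈ p) (hB : IsOpen B) (hAB : A ⊆ B) : B ∈ p := by
  classical
  refine hp.2 (insert B p) ⟨?_, ?_⟩ (Set.subset_insert _ _) (Set.mem_insert _ _)
  · rintro C (rfl | hC)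
    · exact ⟨hB, ((hp.1.1 A hAp).2).mono hAB⟩
    · exact hp.1.1 C hC
  · intro s hs hsub U hUo hU1 hUs
    have hsubp : ↑(insert A (s.erase B)) ⊆ p := by
      intro C hC
      rcases Finset.mem_insert.mp (by exact_mod_cast hC) with rfl | hC'
      · exact hAp
      · obtain ⟨hne, hCs⟩ := Finset.mem_erase.mp hC'
        rcases hsub (by exact_mod_cast hCs) with rfl | h
        · exact absurd rfl hne
        · exact h
    obtain ⟨x, hx⟩ := hp.1.2 (insert A (s.erase B)) ⟨A, Finset.mem_insert_self _ _⟩ hsubp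
      U hUo hU1 hUs
    refine ⟨x, Set.mem_iInter₂.mpr fun C hC => ?_⟩
    have hx' := Set.mem_iInter₂.mp hx
    by_cases hCB : C = B
    · subst hCB
      exact Set.smul_subset_smul_left hAB (hx' A (Finset.mem_insert_self _ _))
    · exact hx' C (Finset.mem_insert_of_mem (Finset.mem_erase.mpr ⟨hCB, hC⟩))

lemma nearUltra_dichotomy {p : Set (Set X)} (hp : IsNearUltrafilter G p) (A : ℕ → Set X)
    (hA : ∀ n, IsOpen (A n) ∧ (A n).Nonempty) (hU : (⋃ n, A n) ∈ p)
    {S : Set ℕ} (hS : S.Nonempty) (hSc : Sᶜ.Nonempty) :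
    (⋃ n ∈ S, A n) ∈ p ∨ (⋃ n ∈ Sᶜ, A n) ∈ p := by
  classical
  by_contra hcon
  push_neg at hcon
  obtain ⟨h1, h2⟩ := hcon
  set BS : Set X := ⋃ n ∈ S, A n with hBSdef
  set BSc : Set X := ⋃ n ∈ Sᶜ, A n with hBScdef
  have hBSo : IsOpen BS := isOpen_biUnion fun n _ => (hA n).1
  have hBSco : IsOpen BSc := isOpen_biUnion fun n _ => (hA n).1
  have hBSne : BS.Nonempty := by
    obtain ⟨n, hn⟩ := hS
    exact ((hA n).2).mono (Set.subset_biUnion_of_mem hn)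
  have hBScne : BSc.Nonempty := by
    obtain ⟨n, hn⟩ := hSc
    exact ((hA n).2).mono (Set.subset_biUnion_of_mem hn)
  -- extract failure witnesses
  have key : ∀ B : Set X, IsOpen B → B.Nonempty → B ∉ p →
      ∃ s : Finset (Set X), s.Nonempty ∧ ↑s ⊆ insert B p ∧
        ∃ U : Set G, IsOpen U ∧ (1 : G) ∈ U ∧ U⁻¹ = U ∧ (⋂ C ∈ s, U • C) = ∅ := by
    intro B hBo hBne hBp
    have hnf : ¬ IsNearFilter G (insert B p) := fun h =>
      hBp (hp.2 _ h (Set.subset_insert _ _) (Set.mem_insert _ _))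
    have hc1 : ∀ C ∈ insert B p, IsOpen C ∧ C.Nonempty := by
      rintro C (rfl | hC)
      · exact ⟨hBo, hBne⟩
      · exact hp.1.1 C hC
    have hc2 : ¬ ∀ s : Finset (Set X), s.Nonempty → ↑s ⊆ insert B p →
        ∀ U : Set G, IsOpen U → (1 : G) ∈ U → U⁻¹ = U → (⋂ C ∈ s, U • C).Nonempty :=
      fun h => hnf ⟨hc1, h⟩
    push_neg at hc2
    obtain ⟨s, hs, hsub, U, hUo, hU1, hUs, hemp⟩ := hc2
    exact ⟨s, hs, hsub, U, hUo, hU1, hUs, hemp⟩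
  obtain ⟨s, hs, hssub, U, hUo, hU1, hUsym, hsemp⟩ := key BS hBSo hBSne h1
  obtain ⟨t, ht, htsub, W, hWo, hW1, hWsym, htemp⟩ := key BSc hBSco hBScne h2
  set t0 : Finset (Set X) := insert (⋃ n, A n) ((s.erase BS) ∪ (t.erase BSc)) with ht0def
  have ht0p : ↑t0 ⊆ p := by
    intro C hC
    rcases Finset.mem_insert.mp (by exact_mod_cast hC) with rfl | hC'
    · exact hU
    · rcases Finset.mem_union.mp hC' with h | h
      · obtain ⟨hne, hCs⟩ := Finset.mem_erase.mp h
        rcases hssub (by exact_mod_cast hCs) with rfl | hh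
        · exact absurd rfl hne
        · exact hh
      · obtain ⟨hne, hCt⟩ := Finset.mem_erase.mp h
        rcases htsub (by exact_mod_cast hCt) with rfl | hh
        · exact absurd rfl hne
        · exact hh
  obtain ⟨x, hx⟩ := hp.1.2 t0 ⟨_, Finset.mem_insert_self _ _⟩ ht0p (U ∩ W)
    (hUo.inter hWo) ⟨hU1, hW1⟩ (by rw [Set.inter_inv, hUsym, hWsym])
  have hx' := Set.mem_iInter₂.mp hx
  have hsplit : (⋃ n, A n) = BS ∪ BSc := by
    rw [hBSdef, hBScdef, ← Set.biUnion_union, Set.union_compl_self, Set.biUnion_univ]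
  have hxu : x ∈ (U ∩ W) • BS ∪ (U ∩ W) • BSc := by
    rw [← Set.smul_union, ← hsplit]
    exact hx' _ (Finset.mem_insert_self _ _)
  rcases hxu with hxB | hxB
  · have : x ∈ ⋂ C ∈ s, U • C := by
      refine Set.mem_iInter₂.mpr fun C hC => ?_
      by_cases hCB : C = BS
      · subst hCB
        exact Set.smul_subset_smul_right Set.inter_subset_left hxB
      · have : x ∈ (U ∩ W) • C :=
          hx' C (Finset.mem_insert_of_mem (Finset.mem_union_left _
            (Finset.mem_erase.mpr ⟨hCB, hC⟩)))
        exact Set.smul_subset_smul_right Set.inter_subset_left this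
    rw [hsemp] at this
    exact this
  · have : x ∈ ⋂ C ∈ t, W • C := by
      refine Set.mem_iInter₂.mpr fun C hC => ?_
      by_cases hCB : C = BSc
      · subst hCB
        exact Set.smul_subset_smul_right Set.inter_subset_right hxB
      · have : x ∈ (U ∩ W) • C :=
          hx' C (Finset.mem_insert_of_mem (Finset.mem_union_right _
            (Finset.mem_erase.mpr ⟨hCB, hC⟩)))
        exact Set.smul_subset_smul_right Set.inter_subset_right this
    rw [htemp] at this
    exact this

lemma nearUltra_not_both {p : Set (Set X)} (hp : IsNearUltrafilter G p) (A : ℕ → Set X)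
    {V : Set G} (hV : IsOpen V) (hV1 : (1 : G) ∈ V) (hVsymm : V⁻¹ = V)
    (hdisj : ∀ m n : ℕ, m ≠ n → Disjoint (V • A m) (V • A n))
    {S : Set ℕ} (h1 : (⋃ n ∈ S, A n) ∈ p) (h2 : (⋃ n ∈ Sᶜ, A n) ∈ p) : False := by
  classical
  obtain ⟨x, hx⟩ := hp.1.2 {(⋃ n ∈ S, A n), (⋃ n ∈ Sᶜ, A n)}
    ⟨_, Finset.mem_insert_self _ _⟩ (by
      intro C hC
      rcases Finset.mem_insert.mp (by exact_mod_cast hC) with rfl | hC'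
      · exact h1
      · rw [Finset.mem_singleton.mp hC']; exact h2)
    V hV hV1 hVsymm
  have hx' := Set.mem_iInter₂.mp hx
  have hx1 : x ∈ V • ⋃ n ∈ S, A n := hx' _ (Finset.mem_insert_self _ _)
  have hx2 : x ∈ V • ⋃ n ∈ Sᶜ, A n :=
    hx' _ (Finset.mem_insert_of_mem (Finset.mem_singleton_self _))
  obtain ⟨u, hu, a, ha, hua⟩ := Set.mem_smul.mp hx1
  obtain ⟨w, hw, b, hb, hwb⟩ := Set.mem_smul.mp hx2
  obtain ⟨m, hmS, ham⟩ := Set.mem_iUnion₂.mp ha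
  obtain ⟨n, hnS, hbn⟩ := Set.mem_iUnion₂.mp hb
  have hmn : m ≠ n := fun h => hnS (h ▸ hmS)
  have hxm : x ∈ V • A m := hua ▸ Set.smul_mem_smul hu ham
  have hxn : x ∈ V • A n := hwb ▸ Set.smul_mem_smul hw hbn
  exact Set.disjoint_left.mp (hdisj m n hmn) hxm hxn

lemma nearUltra_compactSpace : @CompactSpace (NearUltra G X) (nearTopology G X) := by
  letI := nearTopology G X
  refine ⟨?_⟩
  rw [isCompact_iff_ultrafilter_le_nhds]
  intro 𝒢 _
  set F : Set (Set X) := {A | IsOpen A ∧ A.Nonempty ∧ {q : NearUltra G X | A ∈ q.1} ∈ 𝒢}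
    with hFdef
  have hF : IsNearFilter G F := by
    refine ⟨fun A hA => ⟨hA.1, hA.2.1⟩, ?_⟩
    intro s hs hsub U hUo hU1 hUs
    have hmem : (⋂ A ∈ s, {q : NearUltra G X | A ∈ q.1}) ∈ 𝒢 :=
      (Filter.biInter_finset_mem _).mpr fun A hA => (hsub hA).2.2
    obtain ⟨q, hq⟩ := Filter.nonempty_of_mem hmem
    have hq' := Set.mem_iInter₂.mp hq
    exact q.2.1.2 s hs (fun A hA => hq' A hA) U hUo hU1 hUs
  obtain ⟨p, hpu, hFp⟩ := exists_nearUltra F hF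
  refine ⟨⟨p, hpu⟩, Set.mem_univ _, ?_⟩
  refine le_of_le_of_eq (le_iInf₂ fun N hN => ?_) TopologicalSpace.nhds_generateFrom.symm
  obtain ⟨hpN, B, hBo, hBne, rfl⟩ := hN
  rw [Filter.le_principal_iff]
  by_contra hnot
  have : {q : NearUltra G X | B ∉ q.1}ᶜ ∈ 𝒢 := (Ultrafilter.compl_mem_iff_notMem).mpr hnot
  have hBmem : {q : NearUltra G X | B ∈ q.1} ∈ 𝒢 := by
    convert this using 1
    ext q
    simp
  exact hpN (hFp ⟨hBo, hBne, hBmem⟩)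

end Helpers

/-- If there are countably many nonempty open sets whose V-thickenings are
pairwise disjoint for some symmetric open identity neighborhood V, then the
space of near ultrafilters is not metrizable. -/
theorem nearUltra_not_metrizable
    {G X : Type*} [Group G] [TopologicalSpace G] [IsTopologicalGroup G]
    [TopologicalSpace X] [CompactSpace X] [T2Space X]
    [MulAction G X] [ContinuousSMul G X]
    (A : ℕ → Set X) (hA : ∀ n, IsOpen (A n) ∧ (A n).Nonempty)
    (V : Set G) (hV : IsOpen V) (hV1 : (1 : G) ∈ V) (hVsymm : V⁻¹ = V)
    (hdisj : ∀ m n : ℕ, m ≠ n → Disjoint (V • A m) (V • A n)) :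
    ¬ @TopologicalSpace.MetrizableSpace (NearUltra G X) (nearTopology G X) := by
  intro hmet
  letI : TopologicalSpace (NearUltra G X) := nearTopology G X
  haveI : TopologicalSpace.MetrizableSpace (NearUltra G X) := hmet
  haveI : CompactSpace (NearUltra G X) := nearUltra_compactSpace
  set Bu : Set X := ⋃ n, A n with hBudef
  have hBuo : IsOpen Bu := isOpen_iUnion fun n => (hA n).1
  have hBune : Bu.Nonempty := ((hA 0).2).mono (Set.subset_iUnion A 0)
  have hq : ∀ n, ∃ q : Set (Set X), IsNearUltrafilter G q ∧ A n ∈ q ∧ Bu ∈ q := by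
    intro n
    have hnf : IsNearFilter G {A n} := by
      refine ⟨fun C hC => by rw [Set.mem_singleton_iff.mp hC]; exact hA n, ?_⟩
      intro s hs hsub U hUo hU1 hUs
      refine ((hA n).2).mono ?_
      intro x hx
      refine Set.mem_iInter₂.mpr fun C hC => ?_
      rw [Set.mem_singleton_iff.mp (hsub hC)]
      have : (1 : G) • x ∈ U • A n := Set.smul_mem_smul hU1 hx
      rwa [one_smul] at this
    obtain ⟨p, hpu, hsub⟩ := exists_nearUltra {A n} hnf
    exact ⟨p, hpu, hsub rfl,
      hpu.mem_of_superset (hsub rfl) hBuo (Set.subset_iUnion A n)⟩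
  choose q hqu hqA hqB using hq
  set Q : ℕ → NearUltra G X := fun n => ⟨q n, hqu n⟩ with hQdef
  set P : Set (NearUltra G X) := {r | Bu ∈ r.1} with hPdef
  have hPclosed : IsClosed P := by
    rw [← isOpen_compl_iff]
    exact TopologicalSpace.GenerateOpen.basic _ ⟨Bu, hBuo, hBune, rfl⟩
  obtain ⟨r, hrP, φ, hφ, hconv⟩ :=
    hPclosed.isCompact.tendsto_subseq (x := Q) (fun n => hqB n)
  set S : Set ℕ := Set.range fun k => φ (2 * k) with hSdef
  have hSne : S.Nonempty := ⟨φ 0, 0, by norm_num⟩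
  have hScne : Sᶜ.Nonempty := by
    refine ⟨φ 1, fun ⟨k, hk⟩ => ?_⟩
    have := hφ.injective hk
    omega
  have hodd : ∀ k, φ (2 * k + 1) ∈ Sᶜ := by
    intro k
    rintro ⟨j, hj⟩
    have := hφ.injective hj
    omega
  have heven : ∀ k, φ (2 * k) ∈ S := fun k => ⟨k, rfl⟩
  -- common machinery for both cases
  have main : ∀ T : Set ℕ, T.Nonempty → (⋃ n ∈ T, A n) ∉ r.1 →
      ∀ g : ℕ → ℕ, (∀ m, ∃ k ≥ m, φ k ∈ T) → False := by
    intro T hTne hTr g hfreq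
    have hTo : IsOpen (⋃ n ∈ T, A n) := isOpen_biUnion fun n _ => (hA n).1
    have hTne' : (⋃ n ∈ T, A n).Nonempty := by
      obtain ⟨n, hn⟩ := hTne
      exact ((hA n).2).mono (Set.subset_biUnion_of_mem hn)
    have hNopen : IsOpen {y : NearUltra G X | (⋃ n ∈ T, A n) ∉ y.1} :=
      TopologicalSpace.GenerateOpen.basic _ ⟨_, hTo, hTne', rfl⟩
    have hNmem : {y : NearUltra G X | (⋃ n ∈ T, A n) ∉ y.1} ∈ 𝓝 r :=
      hNopen.mem_nhds hTr
    have hev : (Q ∘ φ) ⁻¹' {y : NearUltra G X | (⋃ n ∈ T, A n) ∉ y.1} ∈ Filter.atTop :=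
      hconv hNmem
    obtain ⟨m0, hm0⟩ := Filter.eventually_atTop.mp hev
    obtain ⟨k, hk, hkT⟩ := hfreq m0
    have hnotin : (⋃ n ∈ T, A n) ∉ (Q (φ k)).1 := hm0 k hk
    exact hnotin ((hqu (φ k)).mem_of_superset (hqA (φ k)) hTo
      (Set.subset_biUnion_of_mem hkT))
  have hdich := nearUltra_dichotomy r.2 A hA hrP hSne hScne
  rcases hdich with h | h
  · have h2 : (⋃ n ∈ Sᶜ, A n) ∉ r.1 := fun h2 =>
      nearUltra_not_both r.2 A hV hV1 hVsymm hdisj h h2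
    exact main Sᶜ hScne h2 id fun m => ⟨2 * m + 1, by omega, hodd m⟩
  · have h1 : (⋃ n ∈ S, A n) ∉ r.1 := fun h1 =>
      nearUltra_not_both r.2 A hV hV1 hVsymm hdisj h1 h
    exact main S hSne h1 id fun m => ⟨2 * m, by omega, heven m⟩
end

section
/- Let G be a Polish group acting continuously on a compact metric space X, and suppose there is an open neighborhood U of the identity and a nonempty open B ⊆ X such that for every nonempty open C ⊆ B there is a nonempty open D ⊆ C with C \ UD having nonempty interior. Then there exist nonempty open sets {A_n : n < ω} in X and a symmetric open neighborhood V of the identity such that the sets VA_n are pairwise disjoint. -/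
open Pointwise

/-- From the failure of Rosendal's criterion one extracts countably many
nonempty open sets with pairwise disjoint V-thickenings. -/
theorem exists_disjoint_thickenings
    {G X : Type*} [Group G] [TopologicalSpace G] [IsTopologicalGroup G]
    [PolishSpace G]
    [MetricSpace X] [CompactSpace X]
    [MulAction G X] [ContinuousSMul G X]
    (U : Set G) (hU : IsOpen U) (hU1 : (1 : G) ∈ U)
    (B : Set X) (hB : IsOpen B) (hBne : B.Nonempty)
    (h : ∀ C : Set X, IsOpen C → C.Nonempty → C ⊆ B →
      ∃ D : Set X, IsOpen D ∧ D.Nonempty ∧ D ⊆ C ∧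
        (interior (C \ U • D)).Nonempty) :
    ∃ A : ℕ → Set X, (∀ n, IsOpen (A n) ∧ (A n).Nonempty) ∧
      ∃ V : Set G, IsOpen V ∧ (1 : G) ∈ V ∧ V⁻¹ = V ∧
        ∀ m n : ℕ, m ≠ n → Disjoint (V • A m) (V • A n) := by
  classical
  choose D hDopen hDne hDsub hDint using h
  -- the recursive step
  let T := {C : Set X // IsOpen C ∧ C.Nonempty ∧ C ⊆ B}
  let step : T → T := fun p =>
    ⟨interior (p.1 \ U • D p.1 p.2.1 p.2.2.1 p.2.2.2),
      isOpen_interior, hDint _ _ _ _,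
      fun x hx => p.2.2.2 ((interior_subset hx).1)⟩
  let f : ℕ → T := fun n => step^[n] ⟨B, hB, hBne, subset_rfl⟩
  have hf : ∀ n, f (n + 1) = step (f n) := fun n =>
    Function.iterate_succ_apply' step n _
  let C : ℕ → Set X := fun n => (f n).1
  let A : ℕ → Set X := fun n => D (C n) (f n).2.1 (f n).2.2.1 (f n).2.2.2
  have hCsucc : ∀ n, C (n + 1) ⊆ C n \ U • A n := by
    intro n
    have := hf n
    simp only [C, this]
    exact interior_subset
  have hCanti : Antitone C := antitone_nat_of_succ_le fun n =>
    (hCsucc n).trans Set.diff_subset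
  have hAC : ∀ n, A n ⊆ C n := fun n => hDsub _ _ _ _
  -- find the symmetric neighborhood
  obtain ⟨W, hWopen, hW1, hWW⟩ :=
    exists_open_nhds_one_mul_subset (hU.mem_nhds hU1)
  refine ⟨A, fun n => ⟨hDopen _ _ _ _, hDne _ _ _ _⟩,
    W ∩ W⁻¹, hWopen.inter hWopen.inv, ⟨hW1, by simpa using hW1⟩, ?_, ?_⟩
  · ext g; simp [and_comm]
  · have key : ∀ m n, m < n → Disjoint ((W ∩ W⁻¹) • A m) ((W ∩ W⁻¹) • A n) := by
      intro m n hmn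
      rw [Set.disjoint_left]
      rintro x hxm hxn
      obtain ⟨g, hg, a, ha, rfl⟩ := Set.mem_smul.mp hxm
      obtain ⟨k, hk, b, hb, hkb⟩ := Set.mem_smul.mp hxn
      have hb' : b ∈ C m \ U • A m := by
        have : b ∈ C n := hAC n hb
        exact hCsucc m (hCanti hmn this)
      apply hb'.2
      have : b = (k⁻¹ * g) • a := by
        rw [mul_smul, ← hkb, inv_smul_smul]
      rw [this]
      exact Set.mem_smul.mpr ⟨k⁻¹ * g, hWW (Set.mul_mem_mul hk.2 hg.1), a, ha, rfl⟩
    intro m n hmn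
    rcases hmn.lt_or_gt with h' | h'
    · exact key m n h'
    · exact (key n m h').symm
end

section
/- If M(G) is metrizable and has a comeager orbit, then for every minimal G-flow X, X has a comeager orbit. (Comeager orbits push forward: if π: X → Y is a surjective G-map of minimal flows and x ∈ X has comeager orbit, then π(x) has comeager orbit in Y.) -/
open Pointwise

section AuxNearComeager
open Set TopologicalSpace Topology Filter

/-- Quasi-openness: image under a G-map (onto a compact T2 space) of the closure of a
nonempty open subset of a compact minimal flow has nonempty interior. -/
lemma quasiOpen_aux {G M X : Type*} [Group G] [TopologicalSpace G]
    [TopologicalSpace M] [CompactSpace M] [MulAction G M] [ContinuousSMul G M]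
    [TopologicalSpace X] [CompactSpace X] [T2Space X] [MulAction G X]
    [ContinuousSMul G X] [Nonempty X]
    (hminM : ∀ m : M, Dense (MulAction.orbit G m))
    (π : M → X) (hπc : Continuous π) (hπe : ∀ (g : G) (m : M), π (g • m) = g • π m)
    (hπs : Function.Surjective π)
    {O : Set M} (hO : IsOpen O) (hne : O.Nonempty) :
    (interior (π '' closure O)).Nonempty := by
  -- cover M by translates of O
  have hcov : (Set.univ : Set M) ⊆ ⋃ g : G, g • O := by
    intro y _
    obtain ⟨z, hz, hzO⟩ := (hminM y).exists_mem_open hO hne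
    obtain ⟨g, hg⟩ := hz
    subst hg
    refine Set.mem_iUnion.mpr ⟨g⁻¹, g • y, by simpa using hzO, by simp⟩
  obtain ⟨t, ht⟩ := isCompact_univ.elim_finite_subcover (fun g : G => g • O)
    (fun g => hO.smul g) hcov
  set K : Set X := π '' closure O with hK
  have hKc : IsClosed K := (isClosed_closure.isCompact.image hπc).isClosed
  have hXcov : ⋃ g : t, ((g : G) • K) = Set.univ := by
    apply Set.eq_univ_of_univ_subset
    intro x _
    obtain ⟨y, rfl⟩ := hπs x
    obtain ⟨g, hgt, hy⟩ := Set.mem_iUnion₂.mp (ht (Set.mem_univ y))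
    obtain ⟨z, hzO, rfl⟩ := hy
    exact Set.mem_iUnion.mpr ⟨⟨g, hgt⟩, ⟨π z, ⟨z, subset_closure hzO, rfl⟩, (hπe g z).symm⟩⟩
  obtain ⟨g, hg⟩ := nonempty_interior_of_iUnion_of_closed
    (fun g : t => (hKc.smul (g : G))) hXcov
  rw [interior_smul] at hg
  exact smul_set_nonempty.mp hg

/-- The "test sets" are nowhere dense. -/
lemma Bset_nwd {G M X : Type*} [Group G] [TopologicalSpace G]
    [TopologicalSpace M] [CompactSpace M] [T2Space M] [MulAction G M] [ContinuousSMul G M]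
    [TopologicalSpace X] [CompactSpace X] [T2Space X] [MulAction G X]
    [ContinuousSMul G X] [Nonempty X]
    (hminM : ∀ m : M, Dense (MulAction.orbit G m))
    (π : M → X) (hπc : Continuous π) (hπe : ∀ (g : G) (m : M), π (g • m) = g • π m)
    (hπs : Function.Surjective π)
    {F v : Set M} (hF : IsClosed F) (hFi : interior F = ∅) (hv : IsOpen v) :
    IsNowhereDense {x : X | (π ⁻¹' {x} ∩ v).Nonempty ∧ π ⁻¹' {x} ∩ v ⊆ F} := by
  set B : Set X := {x : X | (π ⁻¹' {x} ∩ v).Nonempty ∧ π ⁻¹' {x} ∩ v ⊆ F} with hB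
  rw [IsNowhereDense, ← Set.not_nonempty_iff_eq_empty]
  rintro ⟨x₀, hx₀⟩
  set W := interior (closure B) with hW
  have hWB : W ⊆ closure B := interior_subset
  obtain ⟨x, hxW, hxB⟩ : ∃ x, x ∈ W ∧ x ∈ B := by
    obtain ⟨x, hx⟩ := mem_closure_iff_nhds.mp (hWB hx₀) W (isOpen_interior.mem_nhds hx₀)
    exact ⟨x, hx.1, hx.2⟩
  obtain ⟨⟨y₀, hy₀f, hy₀v⟩, hsub⟩ := hxB
  -- the open set P
  set P : Set M := (π ⁻¹' W ∩ v) \ F with hP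
  have hPopen : IsOpen P := ((isOpen_interior.preimage hπc).inter hv).sdiff hF
  have hPne : P.Nonempty := by
    by_contra hemp
    rw [Set.not_nonempty_iff_eq_empty, Set.diff_eq_empty] at hemp
    have : (π ⁻¹' W ∩ v).Nonempty := ⟨y₀, show π y₀ ∈ W by rw [show π y₀ = x from hy₀f]; exact hxW, hy₀v⟩
    have h2 : π ⁻¹' W ∩ v ⊆ interior F :=
      interior_maximal hemp ((isOpen_interior.preimage hπc).inter hv)
    rw [hFi] at h2
    exact this.ne_empty (Set.subset_empty_iff.mp h2)
  obtain ⟨y₁, hy₁⟩ := hPne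
  obtain ⟨t, ht, htc, hts⟩ := exists_mem_nhds_isClosed_subset (hPopen.mem_nhds hy₁)
  have hP'ne : (interior t).Nonempty := ⟨y₁, mem_interior_iff_mem_nhds.mpr ht⟩
  -- quasi-openness gives an open set inside W missing B
  have hQne := quasiOpen_aux hminM π hπc hπe hπs isOpen_interior hP'ne
  set Q := interior (π '' closure (interior t)) with hQ
  have hclP : closure (interior t) ⊆ P := (closure_minimal interior_subset htc).trans hts
  have hQW : Q ⊆ W := by
    refine interior_subset.trans ?_
    rintro z ⟨y, hy, rfl⟩
    exact (hclP hy).1.1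
  obtain ⟨q, hq⟩ := hQne
  obtain ⟨z, hzQ, hzB⟩ : ∃ z, z ∈ Q ∧ z ∈ B := by
    obtain ⟨z, hz⟩ := mem_closure_iff_nhds.mp (hWB (hQW hq)) Q (isOpen_interior.mem_nhds hq)
    exact ⟨z, hz.1, hz.2⟩
  obtain ⟨y, hy, hyz⟩ := interior_subset hzQ
  have hyP : y ∈ P := hclP hy
  exact hyP.2 (hzB.2 ⟨by simp [hyz], hyP.1.2⟩)

end AuxNearComeager

universe u v

/-- If the universal minimal flow is metrizable with a comeager orbit, then
every minimal G-flow has a comeager orbit. -/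
theorem comeager_orbit_of_univ_minimal_comeager
    {G : Type v} [Group G] [TopologicalSpace G] [IsTopologicalGroup G]
    [PolishSpace G]
    (M : Type u) [TopologicalSpace M] [CompactSpace M] [T2Space M]
    [MulAction G M] [ContinuousSMul G M]
    (hminM : ∀ m : M, Dense (MulAction.orbit G m))
    (huniv : ∀ (Y : Type u) [TopologicalSpace Y] [CompactSpace Y] [T2Space Y]
        [MulAction G Y] [ContinuousSMul G Y],
      (∀ y : Y, Dense (MulAction.orbit G y)) →
      ∃ π : M → Y, Continuous π ∧ (∀ (g : G) (m : M), π (g • m) = g • π m) ∧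
        Function.Surjective π)
    [TopologicalSpace.MetrizableSpace M]
    (hco : ∃ m : M, MulAction.orbit G m ∈ residual M) :
    ∀ (X : Type u) [TopologicalSpace X] [CompactSpace X] [T2Space X]
        [MulAction G X] [ContinuousSMul G X],
      (∀ x : X, Dense (MulAction.orbit G x)) →
      ∃ x : X, MulAction.orbit G x ∈ residual X := by
  intro X _ _ _ _ _ hminX
  obtain ⟨m, hm⟩ := hco
  obtain ⟨π, hπc, hπe, hπs⟩ := huniv X hminX
  haveI : Nonempty X := ⟨π m⟩
  letI : MetricSpace M := TopologicalSpace.metrizableSpaceMetric M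
  haveI : SecondCountableTopology M := inferInstance
  refine ⟨π m, ?_⟩
  have hmeag : IsMeagre (MulAction.orbit G m)ᶜ := by rw [IsMeagre, compl_compl]; exact hm
  obtain ⟨S, hSnwd, hScnt, hScov⟩ := isMeagre_iff_countable_union_isNowhereDense.mp hmeag
  set 𝒮 : Set (Set X) := (fun p : Set M × Set M =>
      {x : X | (π ⁻¹' {x} ∩ p.2).Nonempty ∧ π ⁻¹' {x} ∩ p.2 ⊆ p.1}) ''
    ((closure '' S) ×ˢ (TopologicalSpace.countableBasis M)) with h𝒮
  have key : IsMeagre (MulAction.orbit G (π m))ᶜ := by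
    rw [isMeagre_iff_countable_union_isNowhereDense]
    refine ⟨𝒮, ?_, ?_, ?_⟩
    · rintro B ⟨⟨F, v⟩, ⟨⟨F₀, hF₀S, rfl⟩, hv⟩, rfl⟩
      have hnwdF : IsNowhereDense (closure F₀) := (hSnwd F₀ hF₀S).closure
      rw [IsNowhereDense, closure_closure] at hnwdF
      exact Bset_nwd hminM π hπc hπe hπs isClosed_closure hnwdF
        ((TopologicalSpace.isBasis_countableBasis M).isOpen hv)
    · exact ((hScnt.image _).prod (TopologicalSpace.countable_countableBasis M)).image _
    · intro x hx
      have hdis : ∀ y, π y = x → y ∉ MulAction.orbit G m := by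
        intro y hy hmem
        obtain ⟨g, hg⟩ := hmem
        exact hx ⟨g, show g • π m = x by rw [← hπe, show g • m = y from hg, hy]⟩
      set K : Set M := π ⁻¹' {x} with hKdef
      have hKc : IsClosed K := isClosed_singleton.preimage hπc
      haveI : CompactSpace K := isCompact_iff_compactSpace.mp hKc.isCompact
      obtain ⟨y₀, hy₀⟩ := hπs x
      haveI : Nonempty K := ⟨⟨y₀, by simp [hKdef, hy₀]⟩⟩
      haveI : Countable (closure '' S : Set (Set M)) := (hScnt.image _).to_subtype
      have hcov : ⋃ F : (closure '' S : Set (Set M)),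
          ((Subtype.val : K → M) ⁻¹' F.1) = Set.univ := by
        apply Set.eq_univ_of_univ_subset
        rintro ⟨y, hyK⟩ -
        have hyo : y ∈ ⋃₀ S := hScov (hdis y (by simpa [hKdef] using hyK))
        obtain ⟨F₀, hF₀S, hyF₀⟩ := hyo
        exact Set.mem_iUnion.mpr ⟨⟨closure F₀, ⟨F₀, hF₀S, rfl⟩⟩, subset_closure hyF₀⟩
      obtain ⟨F, hF⟩ := nonempty_interior_of_iUnion_of_closed
        (f := fun F : (closure '' S : Set (Set M)) => (Subtype.val : K → M) ⁻¹' F.1)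
        (fun F => by
          have hcl : IsClosed (F.1 : Set M) := by
            obtain ⟨F₀, _, h⟩ := F.2
            rw [← h]; exact isClosed_closure
          exact hcl.preimage continuous_subtype_val) hcov
      obtain ⟨⟨y, hyK⟩, hyint⟩ := hF
      have hmemn : (Subtype.val : K → M) ⁻¹' F.1 ∈ nhds (⟨y, hyK⟩ : K) :=
        mem_interior_iff_mem_nhds.mp hyint
      rw [nhds_subtype_eq_comap, Filter.mem_comap] at hmemn
      obtain ⟨tn, htn, htsub⟩ := hmemn
      have hyV : y ∈ interior tn := mem_interior_iff_mem_nhds.mpr htn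
      have hVK : ∀ z ∈ interior tn ∩ K, z ∈ F.1 := by
        rintro z ⟨hz1, hz2⟩
        exact htsub (show (⟨z, hz2⟩ : K).1 ∈ tn from interior_subset hz1)
      obtain ⟨v, hvB, hyv, hvV⟩ :=
        (TopologicalSpace.isBasis_countableBasis M).exists_subset_of_mem_open hyV isOpen_interior
      refine ⟨_, ⟨(F.1, v), Set.mem_prod.mpr ⟨F.2, hvB⟩, rfl⟩, ?_⟩
      exact ⟨⟨y, hyK, hyv⟩, fun z hz => hVK z ⟨hvV hz.2, hz.1⟩⟩
  rwa [IsMeagre, compl_compl] at key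
end

section
/- The map π_X : S_G(X) → X sending each near ultrafilter p to the unique point x_p all of whose neighborhoods lie in p is a continuous G-equivariant map; moreover, for every closed K ⊆ X, π_X⁻¹(K) = {p : A ∈ p for every open A ⊇ K}. -/
open Pointwise

set_option linter.unusedSectionVars false

section Aux

variable {G X : Type*} [Group G] [TopologicalSpace G] [IsTopologicalGroup G]
  [TopologicalSpace X] [CompactSpace X] [T2Space X] [MulAction G X] [ContinuousSMul G X]

variable {G X : Type*} [Group G] [TopologicalSpace G] [IsTopologicalGroup G]
  [TopologicalSpace X] [CompactSpace X] [T2Space X] [MulAction G X] [ContinuousSMul G X]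


/-- Core lemma: closures of any two members of a near filter intersect. -/
lemma core_closure_inter {p : Set (Set X)} (hp : IsNearFilter G p) {A B : Set X}
    (hA : A ∈ p) (hB : B ∈ p) : (closure A ∩ closure B).Nonempty := by
  classical
  set σ := {U : Set G // IsOpen U ∧ (1 : G) ∈ U ∧ U⁻¹ = U} with hσ
  haveI : Nonempty σ := ⟨⟨Set.univ, isOpen_univ, trivial, Set.inv_univ⟩⟩
  set C : σ → Set X := fun U => closure (U.1 • A ∩ U.1 • B) with hC
  have hdir : Directed (· ⊇ ·) C := by
    intro U V
    refine ⟨⟨U.1 ∩ V.1, U.2.1.inter V.2.1, ⟨U.2.2.1, V.2.2.1⟩, by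
      rw [Set.inter_inv, U.2.2.2, V.2.2.2]⟩, ?_, ?_⟩
    · exact closure_mono (Set.inter_subset_inter
        (Set.smul_subset_smul_right Set.inter_subset_left)
        (Set.smul_subset_smul_right Set.inter_subset_left))
    · exact closure_mono (Set.inter_subset_inter
        (Set.smul_subset_smul_right Set.inter_subset_right)
        (Set.smul_subset_smul_right Set.inter_subset_right))
  have hne : ∀ U : σ, (C U).Nonempty := by
    intro U
    have hsub : ↑({A, B} : Finset (Set X)) ⊆ p := by
      intro x hx
      simp only [Finset.coe_insert, Finset.coe_singleton, Set.mem_insert_iff,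
        Set.mem_singleton_iff] at hx
      rcases hx with rfl | rfl <;> assumption
    have := hp.2 {A, B} ⟨A, by simp⟩ hsub U.1 U.2.1 U.2.2.1 U.2.2.2
    have h2 : (⋂ C ∈ ({A, B} : Finset (Set X)), U.1 • C) ⊆ U.1 • A ∩ U.1 • B := by
      intro x hx
      simp only [Finset.mem_insert, Finset.mem_singleton, Set.mem_iInter] at hx
      exact ⟨hx A (Or.inl rfl), hx B (Or.inr rfl)⟩
    exact (this.mono h2).mono subset_closure
  obtain ⟨x₀, hx₀⟩ := IsCompact.nonempty_iInter_of_directed_nonempty_isCompact_isClosed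
    C hdir hne (fun U => (isClosed_closure).isCompact) (fun U => isClosed_closure)
  simp only [Set.mem_iInter] at hx₀
  have key : ∀ D : Set X, D ∈ p → (∀ U : σ, x₀ ∈ closure (U.1 • D)) → x₀ ∈ closure D := by
    intro D _ hcl
    rw [mem_closure_iff]
    intro V hV hxV
    have hc : ContinuousAt (fun q : G × X => q.1 • q.2) (1, x₀) :=
      (continuous_smul).continuousAt
    have hVmem : V ∈ nhds ((1 : G) • x₀) := by rw [one_smul]; exact hV.mem_nhds hxV
    have := hc hVmem
    rw [Filter.mem_map, mem_nhds_prod_iff] at this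
    obtain ⟨U₀, hU₀, W, hW, hUW⟩ := this
    obtain ⟨U₁, hU₁sub, hU₁open, hU₁mem⟩ := mem_nhds_iff.mp hU₀
    obtain ⟨W₁, hW₁sub, hW₁open, hW₁mem⟩ := mem_nhds_iff.mp hW
    set Us : Set G := U₁ ∩ U₁⁻¹ with hUs
    have hUss : Us⁻¹ = Us := by
      rw [hUs, Set.inter_inv, inv_inv, Set.inter_comm]
    have hUsopen : IsOpen Us := hU₁open.inter hU₁open.inv
    have hUsmem : (1 : G) ∈ Us := ⟨hU₁mem, by simpa using hU₁mem⟩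
    have hx₀cl : x₀ ∈ closure (Us • D) := hcl ⟨Us, hUsopen, hUsmem, hUss⟩
    rw [mem_closure_iff] at hx₀cl
    obtain ⟨y, hyW₁, hyUD⟩ := hx₀cl W₁ hW₁open hW₁mem
    obtain ⟨u, hu, a, ha, rfl⟩ := hyUD
    refine ⟨a, ?_, ha⟩
    have hui : u⁻¹ ∈ U₁ := by
      have : u⁻¹ ∈ Us⁻¹ := Set.inv_mem_inv.mpr hu
      rw [hUss] at this; exact this.1
    have : (u⁻¹, u • a) ∈ U₀ ×ˢ W := ⟨hU₁sub hui, hW₁sub hyW₁⟩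
    have := hUW this
    simpa [smul_smul] using this
  exact ⟨x₀, key A hA (fun U => closure_mono Set.inter_subset_left (hx₀ U)),
    key B hB (fun U => closure_mono Set.inter_subset_right (hx₀ U))⟩


/-- Every member of a near ultrafilter has the projection point in its closure. -/
lemma mem_closure_of_mem {p : NearUltra G X} {π : NearUltra G X → X}
    (hπ : ∀ p : NearUltra G X, ∀ A : Set X, IsOpen A → π p ∈ A → A ∈ p.1)
    {A : Set X} (hA : A ∈ p.1) : π p ∈ closure A := by
  by_contra hcl
  obtain ⟨W, hWopen, hWmem, hWsub⟩ := normal_exists_closure_subset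
    (isClosed_singleton (x := π p)) isClosed_closure.isOpen_compl
    (by simpa using hcl)
  have hW : W ∈ p.1 := hπ p W hWopen (hWmem rfl)
  obtain ⟨x, hxA, hxW⟩ := core_closure_inter p.2.1 hA hW
  exact hWsub hxW hxA

end Aux

/-- The canonical map from the space of near ultrafilters to X is a
continuous G-map, and the preimage of a closed set K consists of those p
containing every open set containing K. -/
theorem nearUltra_proj_continuous_equivariant
    {G X : Type*} [Group G] [TopologicalSpace G] [IsTopologicalGroup G]
    [TopologicalSpace X] [CompactSpace X] [T2Space X]
    [MulAction G X] [ContinuousSMul G X]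
    (hact : ∀ (g : G) (p : NearUltra G X),
      IsNearUltrafilter G {A : Set X | g⁻¹ • A ∈ p.1})
    (π : NearUltra G X → X)
    (hπ : ∀ p : NearUltra G X, ∀ A : Set X, IsOpen A → π p ∈ A → A ∈ p.1) :
    @Continuous (NearUltra G X) X (nearTopology G X) _ π ∧
    (∀ (g : G) (p : NearUltra G X),
      π ⟨{A : Set X | g⁻¹ • A ∈ p.1}, hact g p⟩ = g • π p) ∧
    (∀ K : Set X, IsClosed K →
      π ⁻¹' K = {p : NearUltra G X | ∀ A : Set X, IsOpen A → K ⊆ A → A ∈ p.1}) := by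
    classical
  letI : TopologicalSpace (NearUltra G X) := nearTopology G X
  refine ⟨?_, ?_, ?_⟩
  · -- continuity
    rw [continuous_def]
    intro V hV
    by_cases hVu : V = Set.univ
    · subst hVu; simp only [Set.preimage_univ]; exact isOpen_univ
    obtain ⟨x₁, hx₁⟩ : Vᶜ.Nonempty := by
      rw [Set.nonempty_compl]; exact hVu
    have : π ⁻¹' V = ⋃ (A : {A : Set X // IsOpen A ∧ A.Nonempty ∧ Vᶜ ⊆ A}),
        {p : NearUltra G X | A.1 ∉ p.1} := by
      ext p
      simp only [Set.mem_preimage, Set.mem_iUnion, Set.mem_setOf_eq]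
      constructor
      · intro hp
        obtain ⟨W, hWopen, hWmem, hWsub⟩ := normal_exists_closure_subset
          (isClosed_singleton (x := π p)) hV (by simpa using hp)
        refine ⟨⟨(closure W)ᶜ, isClosed_closure.isOpen_compl,
          ⟨x₁, fun h => hx₁ (hWsub h)⟩, fun y hy h => hy (hWsub h)⟩, ?_⟩
        intro hmem
        have := mem_closure_of_mem hπ hmem
        have hsub : closure ((closure W)ᶜ) ⊆ Wᶜ :=
          closure_minimal (Set.compl_subset_compl.mpr subset_closure)
            hWopen.isClosed_compl
        exact hsub this (hWmem rfl)
      · rintro ⟨⟨A, hAopen, hAne, hAsub⟩, hAp⟩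
        by_contra hpV
        exact hAp (hπ p A hAopen (hAsub hpV))
    rw [this]
    refine isOpen_iUnion fun A => ?_
    exact TopologicalSpace.isOpen_generateFrom_of_mem ⟨A.1, A.2.1, A.2.2.1, rfl⟩
  · -- equivariance
    intro g p
    set q : NearUltra G X := ⟨{A : Set X | g⁻¹ • A ∈ p.1}, hact g p⟩ with hq
    by_contra hne
    obtain ⟨V₁, V₂, hV₁, hV₂, hm₁, hm₂, hdisj⟩ := t2_separation hne
    obtain ⟨W₁, hW₁open, hW₁mem, hW₁sub⟩ := normal_exists_closure_subset
      (isClosed_singleton (x := π q)) hV₁ (by simpa using hm₁)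
    obtain ⟨W₂, hW₂open, hW₂mem, hW₂sub⟩ := normal_exists_closure_subset
      (isClosed_singleton (x := g • π p)) hV₂ (by simpa using hm₂)
    have h₁ : W₁ ∈ q.1 := hπ q W₁ hW₁open (hW₁mem rfl)
    have h₂ : W₂ ∈ q.1 := by
      show g⁻¹ • W₂ ∈ p.1
      refine hπ p (g⁻¹ • W₂) (hW₂open.smul g⁻¹) ?_
      refine ⟨g • π p, hW₂mem rfl, ?_⟩
      simp [smul_smul]
    obtain ⟨x, hx₁, hx₂⟩ := core_closure_inter q.2.1 h₁ h₂
    exact hdisj.le_bot ⟨hW₁sub hx₁, hW₂sub hx₂⟩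
  · -- preimage of closed sets
    intro K hK
    ext p
    simp only [Set.mem_preimage, Set.mem_setOf_eq]
    constructor
    · intro hp A hAopen hKA
      exact hπ p A hAopen (hKA hp)
    · intro hp
      by_contra hpK
      obtain ⟨U₁, U₂, hU₁, hU₂, hKU, hpU, hdisj⟩ :=
        NormalSpace.normal K {π p} hK isClosed_singleton
          (Set.disjoint_singleton_right.mpr hpK)
      obtain ⟨A, hAopen, hKA, hAsub⟩ := normal_exists_closure_subset hK hU₁ hKU
      obtain ⟨W, hWopen, hWmem, hWsub⟩ := normal_exists_closure_subset
        (isClosed_singleton (x := π p)) hU₂ hpU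
      have hAp : A ∈ p.1 := hp A hAopen hKA
      have hWp : W ∈ p.1 := hπ p W hWopen (hWmem rfl)
      obtain ⟨x, hxA, hxW⟩ := core_closure_inter p.2.1 hAp hWp
      exact hdisj.le_bot ⟨hAsub hxA, hWsub hxW⟩
end

section
/- If X is a minimal G-flow, the canonical map π_X : S_G(X) → X is highly proximal: every nonempty open subset of S_G(X) contains a fiber π_X⁻¹({x}) for some x ∈ X. -/
open Pointwise

section Aux

set_option linter.unusedSectionVars false

variable {G X : Type*} [Group G] [TopologicalSpace G] [IsTopologicalGroup G]
    [TopologicalSpace X] [CompactSpace X] [T2Space X]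
    [MulAction G X] [ContinuousSMul G X]

lemma aux_isOpen_smul {U : Set G} {A : Set X} (hA : IsOpen A) : IsOpen (U • A) := by
  rw [← Set.iUnion_smul_left_image]
  exact isOpen_biUnion fun g _ => hA.smul g

lemma aux_subset_smul {U : Set G} {A : Set X} (hU : (1 : G) ∈ U) : A ⊆ U • A := by
  intro x hx
  simpa using Set.smul_mem_smul hU hx

lemma aux_sep {K C : Set X} (hK : IsCompact K) (hC : IsClosed C)
    (hd : Disjoint K C) :
    ∃ W : Set G, IsOpen W ∧ (1 : G) ∈ W ∧ ∀ g ∈ W, ∀ x ∈ K, g • x ∉ C := by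
  have h : ∀ a ∈ K, ∃ P : Set G × Set X, (IsOpen P.1 ∧ (1:G) ∈ P.1) ∧ (IsOpen P.2 ∧ a ∈ P.2) ∧
      ∀ g ∈ P.1, ∀ x ∈ P.2, g • x ∉ C := by
    intro a ha
    have hc : ContinuousAt (fun q : G × X => q.1 • q.2) (1, a) :=
      (continuous_smul (M := G) (X := X)).continuousAt
    have hmem : (fun q : G × X => q.1 • q.2) ⁻¹' Cᶜ ∈ nhds ((1 : G), a) := by
      apply hc.preimage_mem_nhds
      exact hC.isOpen_compl.mem_nhds (by simpa using Set.disjoint_left.mp hd ha)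
    rcases mem_nhds_prod_iff'.mp hmem with ⟨u, v, hu, h1u, hv, hav, huv⟩
    exact ⟨(u, v), ⟨hu, h1u⟩, ⟨hv, hav⟩, fun g hg x hx => huv (Set.mk_mem_prod hg hx)⟩
  choose! P hP1 hP2 hP3 using h
  rcases hK.elim_nhds_subcover' (fun a ha => (P a).2)
      (fun a ha => ((hP2 a ha).1).mem_nhds ((hP2 a ha).2)) with ⟨t, ht⟩
  refine ⟨⋂ a ∈ t, (P a).1, isOpen_biInter_finset (fun a ha => (hP1 a a.2).1),
    Set.mem_iInter₂.mpr fun a ha => (hP1 a a.2).2, ?_⟩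
  intro g hg x hx
  rcases Set.mem_iUnion₂.mp (ht hx) with ⟨a, hat, hax⟩
  exact hP3 a a.2 g (Set.mem_iInter₂.mp hg a hat) x hax

lemma aux_not_near {A V : Set X} (hA : IsOpen A) (hV : IsOpen V)
    (hd : Disjoint (closure V) (closure A)) :
    ∃ U : Set G, IsOpen U ∧ (1 : G) ∈ U ∧ U⁻¹ = U ∧ (U • V) ∩ (U • A) = ∅ := by
  obtain ⟨W, hWo, hW1, hWsep⟩ := aux_sep (G := G) (isClosed_closure (s := A)).isCompact
    isClosed_closure hd.symm
  obtain ⟨V₀, hV₀o, hV₀1, hV₀mul⟩ := exists_open_nhds_one_mul_subset (hWo.mem_nhds hW1)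
  refine ⟨V₀ ∩ V₀⁻¹, hV₀o.inter hV₀o.inv, ⟨hV₀1, by simpa using hV₀1⟩, by
      ext g; simp only [Set.mem_inv, Set.mem_inter_iff, inv_inv]; tauto, ?_⟩
  ext y
  simp only [Set.mem_inter_iff, Set.mem_empty_iff_false, iff_false]
  rintro ⟨hyV, hyA⟩
  rcases hyV with ⟨u, hu, v, hv, rfl⟩
  rcases hyA with ⟨u', hu', a, ha, hua⟩
  have hv' : v = (u⁻¹ * u') • a := by
    have hua' : u' • a = u • v := hua
    rw [mul_smul, hua', inv_smul_smul]
  have hmem : u⁻¹ * u' ∈ W := hV₀mul (Set.mul_mem_mul hu.2 hu'.1)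
  exact hWsep _ hmem a (subset_closure ha) (hv' ▸ subset_closure hv)

lemma aux_mem_of_dense {p : Set (Set X)} (hp : IsNearUltrafilter G p) {A : Set X}
    (hAo : IsOpen A) (hAne : A.Nonempty) (hAd : Dense A) : A ∈ p := by
  classical
  refine hp.2 (insert A p) ⟨?_, ?_⟩ (Set.subset_insert _ _) (Set.mem_insert _ _)
  · rintro B (rfl | hB)
    · exact ⟨hAo, hAne⟩
    · exact hp.1.1 B hB
  · intro s hs hsub U hUo hU1 hUs
    by_cases hA : A ∈ s
    · set s' := s.erase A with hs'def
      have hs'sub : ↑s' ⊆ p := by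
        intro B hB
        have hB' : B ∈ s' := hB
        rcases hsub (Finset.coe_subset.mpr (s.erase_subset A) hB') with rfl | h
        · exact absurd rfl (Finset.ne_of_mem_erase hB')
        · exact h
      rcases s'.eq_empty_or_nonempty with he | hne
      · obtain ⟨a, ha⟩ := hAne
        refine ⟨a, Set.mem_iInter₂.mpr fun B hB => ?_⟩
        have : B = A := by
          by_contra hne'
          exact (Finset.notMem_empty B) (he ▸ Finset.mem_erase.mpr ⟨hne', hB⟩)
        subst this
        exact aux_subset_smul hU1 ha
      · obtain ⟨y, hy⟩ := hp.1.2 s' hne hs'sub U hUo hU1 hUs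
        have hopen : IsOpen (⋂ B ∈ s', U • B) :=
          isOpen_biInter_finset fun B hB => aux_isOpen_smul (hp.1.1 B (hs'sub hB)).1
        obtain ⟨z, hz, hzA⟩ := hAd.inter_open_nonempty _ hopen ⟨y, hy⟩
        refine ⟨z, Set.mem_iInter₂.mpr fun B hB => ?_⟩
        rcases eq_or_ne B A with rfl | hne'
        · exact aux_subset_smul hU1 hzA
        · exact Set.mem_iInter₂.mp hz B (Finset.mem_erase.mpr ⟨hne', hB⟩)
    · refine hp.1.2 s hs ?_ U hUo hU1 hUs
      intro B hB
      rcases hsub hB with rfl | h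
      · exact absurd hB hA
      · exact h

lemma aux_witness {p : Set (Set X)} (hp : IsNearUltrafilter G p) {A : Set X}
    (hAo : IsOpen A) (hAne : A.Nonempty) (hA : A ∉ p) :
    ∃ (s : Finset (Set X)) (U : Set G), A ∈ s ∧ ↑s ⊆ insert A p ∧ IsOpen U ∧
      (1 : G) ∈ U ∧ U⁻¹ = U ∧ (⋂ B ∈ s, U • B) = ∅ := by
  by_contra h
  push_neg at h
  apply hA
  refine hp.2 (insert A p) ⟨?_, ?_⟩ (Set.subset_insert _ _) (Set.mem_insert _ _)
  · rintro B (rfl | hB)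
    · exact ⟨hAo, hAne⟩
    · exact hp.1.1 B hB
  · intro s hs hsub U hUo hU1 hUs
    by_cases hAs : A ∈ s
    · exact h s U hAs hsub hUo hU1 hUs
    · refine hp.1.2 s hs ?_ U hUo hU1 hUs
      intro B hB
      rcases hsub hB with rfl | hB'
      · exact absurd hB hAs
      · exact hB'

lemma aux_union_not_mem {p : Set (Set X)} (hp : IsNearUltrafilter G p) (T : Finset (Set X))
    (hTo : ∀ A ∈ T, IsOpen A ∧ A.Nonempty) (hTn : ∀ A ∈ T, A ∉ p) :
    (⋃ A ∈ T, A) ∉ p := by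
  classical
  intro hmem
  have hw : ∀ A ∈ T, ∃ (s : Finset (Set X)) (U : Set G), A ∈ s ∧ ↑s ⊆ insert A p ∧ IsOpen U ∧
      (1 : G) ∈ U ∧ U⁻¹ = U ∧ (⋂ B ∈ s, U • B) = ∅ :=
    fun A hA => aux_witness hp (hTo A hA).1 (hTo A hA).2 (hTn A hA)
  choose! sA UA h1 h2 h3 h4 h5 h6 using hw
  have hTne : T.Nonempty := by
    rcases T.eq_empty_or_nonempty with rfl | h
    · simp only [Finset.notMem_empty, Set.iUnion_of_empty, Set.iUnion_empty] at hmem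
      exact absurd (hp.1.1 _ hmem).2 (by simp)
    · exact h
  set s : Finset (Set X) := insert (⋃ A ∈ T, A) (T.biUnion fun A => (sA A).erase A) with hsdef
  set U : Set G := ⋂ A ∈ T, UA A with hUdef
  have hssub : ↑s ⊆ p := by
    intro B hB
    rcases Finset.mem_insert.mp hB with rfl | hB'
    · exact hmem
    · rcases Finset.mem_biUnion.mp hB' with ⟨A, hAT, hBA⟩
      rcases h2 A hAT (Finset.mem_coe.mpr (Finset.mem_of_mem_erase hBA)) with rfl | h
      · exact absurd rfl (Finset.ne_of_mem_erase hBA)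
      · exact h
  have hUo : IsOpen U := isOpen_biInter_finset fun A hA => h3 A hA
  have hU1 : (1 : G) ∈ U := Set.mem_iInter₂.mpr fun A hA => h4 A hA
  have hUsym : U⁻¹ = U := by
    ext g
    rw [Set.mem_inv]
    simp only [hUdef, Set.mem_iInter]
    refine forall₂_congr fun A hA => ?_
    conv_lhs => rw [← h5 A hA]
    rw [Set.mem_inv, inv_inv]
  obtain ⟨y, hy⟩ := hp.1.2 s ⟨_, Finset.mem_insert_self _ _⟩ hssub U hUo hU1 hUsym
  have hyU : y ∈ U • ⋃ A ∈ T, A := Set.mem_iInter₂.mp hy _ (Finset.mem_insert_self _ _)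
  rcases hyU with ⟨u, hu, x, hx, rfl⟩
  rcases Set.mem_iUnion₂.mp hx with ⟨A₀, hA₀, hxA₀⟩
  have hcontra : u • x ∈ ⋂ B ∈ sA A₀, UA A₀ • B := by
    refine Set.mem_iInter₂.mpr fun B hB => ?_
    rcases eq_or_ne B A₀ with rfl | hne
    · exact Set.smul_mem_smul (Set.mem_iInter₂.mp hu _ hA₀) hxA₀
    · have hBs : B ∈ s := Finset.mem_insert_of_mem
        (Finset.mem_biUnion.mpr ⟨A₀, hA₀, Finset.mem_erase.mpr ⟨hne, hB⟩⟩)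
      have := Set.mem_iInter₂.mp hy B hBs
      rcases this with ⟨u', hu', b, hb, hub⟩
      exact ⟨u', Set.mem_iInter₂.mp hu' A₀ hA₀, b, hb, hub⟩
  rw [h6 A₀ hA₀] at hcontra
  exact hcontra

end Aux

section Aux2
set_option linter.unusedSectionVars false

variable {G X : Type*} [Group G] [TopologicalSpace G] [IsTopologicalGroup G]
    [TopologicalSpace X] [CompactSpace X] [T2Space X]
    [MulAction G X] [ContinuousSMul G X]

lemma aux_fiber (π : {F : Set (Set X) // IsNearUltrafilter G F} → X)
    (hπ : ∀ p : {F : Set (Set X) // IsNearUltrafilter G F},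
      ∀ A : Set X, IsOpen A → π p ∈ A → A ∈ p.1)
    (p : {F : Set (Set X) // IsNearUltrafilter G F}) (T : Finset (Set X))
    (hTo : ∀ A ∈ T, IsOpen A ∧ A.Nonempty) (hTp : ∀ A ∈ T, A ∉ p.1) :
    ∃ x : X, ∀ q : {F : Set (Set X) // IsNearUltrafilter G F},
      π q = x → ∀ A ∈ T, A ∉ q.1 := by
  classical
  rcases T.eq_empty_or_nonempty with rfl | hTne
  · exact ⟨π p, fun q _ A hA => absurd hA (Finset.notMem_empty A)⟩
  set Au : Set X := ⋃ A ∈ T, A with hAudef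
  have hAuo : IsOpen Au := isOpen_biUnion fun A hA => (hTo A hA).1
  have hAune : Au.Nonempty := by
    obtain ⟨A0, hA0⟩ := hTne
    obtain ⟨z, hz⟩ := (hTo A0 hA0).2
    exact ⟨z, Set.mem_iUnion₂.mpr ⟨A0, hA0, hz⟩⟩
  have hnd : ¬ Dense Au := fun hd =>
    aux_union_not_mem p.2 T hTo hTp (aux_mem_of_dense p.2 hAuo hAune hd)
  have hx' : ∃ x : X, x ∉ closure Au := by
    rw [Dense] at hnd; push_neg at hnd; exact hnd
  obtain ⟨x, hx⟩ := hx'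
  obtain ⟨V, hVo, hxV, hVc⟩ := IsCompact.exists_isOpen_closure_subset
    (isCompact_singleton (x := x)) (by
      rw [nhdsSet_singleton]
      exact isClosed_closure.isOpen_compl.mem_nhds hx)
  refine ⟨x, fun q hq A hAT hAq => ?_⟩
  have hVq : V ∈ q.1 := hπ q V hVo (by rw [hq]; exact hxV (Set.mem_singleton x))
  have hdisj : Disjoint (closure V) (closure A) := by
    rw [Set.disjoint_left]
    intro z hzV hzA
    exact hVc hzV (closure_mono (Set.subset_iUnion₂ (s := fun A _ => A) A hAT) hzA)
  obtain ⟨U, hUo, hU1, hUs, hUe⟩ := aux_not_near (G := G) (hTo A hAT).1 hVo hdisj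
  obtain ⟨y, hy⟩ := q.2.1.2 {V, A} ⟨V, by simp⟩
    (by
      intro B hB
      rcases Finset.mem_insert.mp hB with rfl | hB'
      · exact hVq
      · rw [Finset.mem_singleton.mp hB']; exact hAq)
    U hUo hU1 hUs
  have h1 : y ∈ U • V := Set.mem_iInter₂.mp hy V (by simp)
  have h2 : y ∈ U • A := Set.mem_iInter₂.mp hy A (by simp)
  exact absurd (Set.mem_inter h1 h2) (by rw [hUe]; exact Set.notMem_empty y)

end Aux2


/-- If X is minimal, the canonical map from the space of near ultrafilters
to X is highly proximal: every nonempty open set contains a fiber. -/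
theorem nearUltra_proj_highlyProximal
    {G X : Type*} [Group G] [TopologicalSpace G] [IsTopologicalGroup G]
    [TopologicalSpace X] [CompactSpace X] [T2Space X]
    [MulAction G X] [ContinuousSMul G X]
    (hmin : ∀ x : X, Dense (MulAction.orbit G x))
    (π : NearUltra G X → X)
    (hπ : ∀ p : NearUltra G X, ∀ A : Set X, IsOpen A → π p ∈ A → A ∈ p.1) :
    ∀ W : Set (NearUltra G X), @IsOpen (NearUltra G X) (nearTopology G X) W →
      W.Nonempty → ∃ x : X, π ⁻¹' {x} ⊆ W := by
  classical
  intro W hW hne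
  letI : TopologicalSpace (NearUltra G X) := nearTopology G X
  obtain ⟨p, hp⟩ := hne
  have hbasis := TopologicalSpace.isTopologicalBasis_of_subbasis
    (s := {N | ∃ A : Set X, IsOpen A ∧ A.Nonempty ∧ N = {p : NearUltra G X | A ∉ p.1}})
    rfl
  obtain ⟨B, hB, hpB, hBW⟩ := hbasis.exists_subset_of_mem_open hp hW
  obtain ⟨f, ⟨hfin, hfsub⟩, rfl⟩ := hB
  have hch : ∀ N ∈ f, ∃ A : Set X, IsOpen A ∧ A.Nonempty ∧
      N = {p : NearUltra G X | A ∉ p.1} := fun N hN => hfsub hN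
  choose! a ha1 ha2 ha3 using hch
  set T : Finset (Set X) := hfin.toFinset.image a with hTdef
  have hmemT : ∀ A, A ∈ T ↔ ∃ N ∈ f, a N = A := by
    intro A
    simp [hTdef, Finset.mem_image, Set.Finite.mem_toFinset]
  have hTo : ∀ A ∈ T, IsOpen A ∧ A.Nonempty := by
    intro A hA
    obtain ⟨N, hN, rfl⟩ := (hmemT A).mp hA
    exact ⟨ha1 N hN, ha2 N hN⟩
  have hTp : ∀ A ∈ T, A ∉ p.1 := by
    intro A hA
    obtain ⟨N, hN, rfl⟩ := (hmemT A).mp hA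
    have : p ∈ N := Set.mem_sInter.mp hpB N hN
    rw [ha3 N hN] at this
    exact this
  obtain ⟨x, hx⟩ := aux_fiber π hπ p T hTo hTp
  refine ⟨x, fun q hq => hBW ?_⟩
  intro N hN
  rw [ha3 N hN]
  exact hx q (Set.mem_singleton_iff.mp hq) (a N) ((hmemT (a N)).mpr ⟨N, hN, rfl⟩)
end

section
/- Let φ: Y → X be a highly proximal extension of minimal G-flows and B ⊆ Y open nonempty. The fiber image φ_fib(B) = {x ∈ X : φ⁻¹({x}) ⊆ B} is a nonempty open subset of X, and for any open identity neighborhood V, V·φ_fib(B) ⊆ φ_fib(VB). -/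
open Pointwise

/-- Fiber images of nonempty open sets under a highly proximal extension are
nonempty open, and thickenings interact well with fiber images. -/
theorem fiberImage_open_nonempty
    {G X Y : Type*} [Group G] [TopologicalSpace G] [IsTopologicalGroup G]
    [TopologicalSpace X] [CompactSpace X] [T2Space X]
    [MulAction G X] [ContinuousSMul G X]
    [TopologicalSpace Y] [CompactSpace Y] [T2Space Y]
    [MulAction G Y] [ContinuousSMul G Y]
    (hminX : ∀ x : X, Dense (MulAction.orbit G x))
    (hminY : ∀ y : Y, Dense (MulAction.orbit G y))
    (φ : Y → X) (hcont : Continuous φ)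
    (hequiv : ∀ (g : G) (y : Y), φ (g • y) = g • φ y)
    (hsurj : Function.Surjective φ)
    (hhp : ∀ W : Set Y, IsOpen W → W.Nonempty → ∃ x : X, φ ⁻¹' {x} ⊆ W)
    (B : Set Y) (hB : IsOpen B) (hBne : B.Nonempty) :
    IsOpen {x : X | φ ⁻¹' {x} ⊆ B} ∧ {x : X | φ ⁻¹' {x} ⊆ B}.Nonempty ∧
    ∀ V : Set G, IsOpen V → (1 : G) ∈ V →
      V • {x : X | φ ⁻¹' {x} ⊆ B} ⊆ {x : X | φ ⁻¹' {x} ⊆ V • B} := by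
  refine ⟨?_, ?_, ?_⟩
  · have hc : IsClosed (φ '' Bᶜ) :=
      ((hB.isClosed_compl.isCompact).image hcont).isClosed
    have : {x : X | φ ⁻¹' {x} ⊆ B} = (φ '' Bᶜ)ᶜ := by
      ext x
      constructor
      · intro h hmem
        obtain ⟨y, hy, hyx⟩ := hmem
        exact hy (h hyx)
      · intro h y hy
        by_contra hyB
        exact h ⟨y, hyB, hy⟩
    rw [this]
    exact hc.isOpen_compl
  · obtain ⟨x, hx⟩ := hhp B hB hBne
    exact ⟨x, hx⟩
  · intro V hV hV1 x hx
    obtain ⟨g, hg, x₀, hx₀, rfl⟩ := hx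
    intro y hy
    have : φ (g⁻¹ • y) = x₀ := by
      rw [hequiv, hy, inv_smul_smul]
    have hmem : g⁻¹ • y ∈ B := hx₀ this
    refine ⟨g, hg, g⁻¹ • y, hmem, ?_⟩
    simp
end

section
/- Let X be a minimal G-flow. Then π_X : S_G(X) → X is the universal highly proximal extension of X: for every highly proximal G-map φ: Y → X of minimal flows, there exists a continuous G-map ψ: S_G(X) → Y with π_X = φ ∘ ψ. -/
open Pointwise

section Aux
variable {G X : Type*} [Group G] [TopologicalSpace G] [IsTopologicalGroup G]
  [TopologicalSpace X] [MulAction G X] [ContinuousSMul G X]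

lemma nuf_smul_open (U : Set G) {B : Set X} (hB : IsOpen B) : IsOpen (U • B) := by
  rw [← Set.iUnion_smul_set]
  exact isOpen_biUnion (fun g _ => hB.smul g)

lemma nuf_avoid {B : Set X} {x : X} (hx : x ∉ closure B) :
    ∃ U : Set G, IsOpen U ∧ (1:G) ∈ U ∧ U⁻¹ = U ∧ x ∉ closure (U • B) := by
  have hc : Continuous (fun q : G × X => q.1 • q.2) := continuous_smul
  have ho : IsOpen ((fun q : G × X => q.1 • q.2) ⁻¹' (closure B)ᶜ) :=
    (isClosed_closure.isOpen_compl).preimage hc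
  have hmem : ((1:G), x) ∈ (fun q : G × X => q.1 • q.2) ⁻¹' (closure B)ᶜ := by
    simp [hx]
  rcases isOpen_prod_iff.1 ho 1 x hmem with ⟨U, V, hU, hV, h1U, hxV, hUV⟩
  refine ⟨U ∩ U⁻¹, hU.inter hU.inv, ⟨h1U, by simpa using h1U⟩, by ext u; simp [and_comm], ?_⟩
  intro hxcl
  rcases mem_closure_iff.1 hxcl V hV hxV with ⟨v, hvV, hvB⟩
  rcases Set.mem_smul.1 hvB with ⟨u, hu, b, hb, rfl⟩
  have hui : u⁻¹ ∈ U := by have := hu.2; simpa using this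
  have h2 := hUV (Set.mk_mem_prod hui hvV)
  simp only [Set.mem_preimage, Set.mem_compl_iff] at h2
  exact h2 (by simpa using subset_closure hb)

lemma nuf_biInter_nonempty (p : NearUltra G X) (S : Finset (Set X)) (hS : ↑S ⊆ p.1)
    (hX : Nonempty X) {U : Set G} (hUo : IsOpen U) (hU1 : (1:G) ∈ U) (hUs : U⁻¹ = U) :
    (⋂ A ∈ S, U • A).Nonempty := by
  rcases S.eq_empty_or_nonempty with rfl | hne
  · exact ⟨Classical.arbitrary X, by simp⟩
  · exact p.2.1.2 S hne hS U hUo hU1 hUs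

/-- insertion lemma: if `A₀` is compatible with `p` then `A₀ ∈ p`. -/
lemma nuf_ins (p : NearUltra G X) {A₀ : Set X} (hA₀o : IsOpen A₀) (hA₀ne : A₀.Nonempty)
    (h : ∀ S : Finset (Set X), ↑S ⊆ p.1 → ∀ U : Set G, IsOpen U → (1:G) ∈ U → U⁻¹ = U →
      (A₀ ∩ ⋂ A ∈ S, U • A).Nonempty) : A₀ ∈ p.1 := by
  classical
  have hnf : IsNearFilter G (insert A₀ p.1) := by
    constructor
    · rintro A (rfl | hA)
      · exact ⟨hA₀o, hA₀ne⟩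
      · exact p.2.1.1 A hA
    · intro s hsne hssub U hUo hU1 hUs
      by_cases hA₀s : A₀ ∈ s
      · have hsub : ↑(s.erase A₀) ⊆ p.1 := by
          intro A hA
          have hA' := Finset.mem_erase.1 hA
          rcases hssub hA'.2 with rfl | hmem
          · exact absurd rfl hA'.1
          · exact hmem
        rcases h (s.erase A₀) hsub U hUo hU1 hUs with ⟨x, hx0, hxS⟩
        refine ⟨x, Set.mem_iInter₂.2 fun A hA => ?_⟩
        by_cases hAA : A = A₀
        · subst hAA
          simpa using Set.smul_mem_smul hU1 hx0
        · exact Set.mem_iInter₂.1 hxS A (Finset.mem_erase.2 ⟨hAA, hA⟩)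
      · refine p.2.1.2 s hsne ?_ U hUo hU1 hUs
        intro A hA
        rcases hssub hA with rfl | hmem
        · exact absurd hA hA₀s
        · exact hmem
  exact p.2.2 _ hnf (Set.subset_insert _ _) (Set.mem_insert _ _)

/-- dichotomy: if `O₁ ∪ O₂` is dense and `O₂ ∉ p`, then `O₁ ∈ p`. -/
lemma nuf_dich (p : NearUltra G X) {O₁ O₂ : Set X} (h₁o : IsOpen O₁) (h₁ne : O₁.Nonempty)
    (h₂o : IsOpen O₂) (h₂ne : O₂.Nonempty)
    (hd : ∀ T : Set X, IsOpen T → T.Nonempty → (T ∩ (O₁ ∪ O₂)).Nonempty)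
    (h₂ : O₂ ∉ p.1) : O₁ ∈ p.1 := by
  classical
  -- extract a violation witnessing that `insert O₂ p.1` is not a near filter
  have hnot : ¬ IsNearFilter G (insert O₂ p.1) := by
    intro h
    exact h₂ (p.2.2 _ h (Set.subset_insert _ _) (Set.mem_insert _ _))
  have hc1 : ∀ A ∈ insert O₂ p.1, IsOpen A ∧ A.Nonempty := by
    rintro A (rfl | hA)
    · exact ⟨h₂o, h₂ne⟩
    · exact p.2.1.1 A hA
  have hviol : ¬ ∀ s : Finset (Set X), s.Nonempty → ↑s ⊆ insert O₂ p.1 →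
      ∀ U : Set G, IsOpen U → (1 : G) ∈ U → U⁻¹ = U → (⋂ A ∈ s, U • A).Nonempty :=
    fun h2 => hnot ⟨hc1, h2⟩
  push_neg at hviol
  obtain ⟨s₂, hs₂ne, hs₂sub, U₂, hU₂o, hU₂1, hU₂s, hbad⟩ := hviol
  have hO₂s : O₂ ∈ s₂ := by
    by_contra hO
    have : ↑s₂ ⊆ p.1 := by
      intro A hA
      rcases hs₂sub hA with rfl | hm
      · exact absurd hA hO
      · exact hm
    rcases p.2.1.2 s₂ hs₂ne this U₂ hU₂o hU₂1 hU₂s with ⟨x, hx⟩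
    rw [hbad] at hx; exact hx
  have hS₂ : ↑(s₂.erase O₂) ⊆ p.1 := by
    intro A hA
    have hA' := Finset.mem_erase.1 hA
    rcases hs₂sub hA'.2 with rfl | hm
    · exact absurd rfl hA'.1
    · exact hm
  -- now verify the insertion condition for O₁
  refine nuf_ins p h₁o h₁ne ?_
  intro S hSsub U hUo hU1 hUs
  have hU'o : IsOpen (U ∩ U₂) := hUo.inter hU₂o
  have hU'1 : (1:G) ∈ U ∩ U₂ := ⟨hU1, hU₂1⟩
  have hU's : (U ∩ U₂)⁻¹ = U ∩ U₂ := by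
    rw [Set.inter_inv, hUs, hU₂s]
  have hT : (⋂ A ∈ (S ∪ s₂.erase O₂ : Finset (Set X)), (U ∩ U₂) • A).Nonempty := by
    refine nuf_biInter_nonempty p _ ?_ ⟨h₁ne.choose⟩ hU'o hU'1 hU's
    intro A hA
    rcases Finset.mem_union.1 (by exact_mod_cast hA) with h | h
    · exact hSsub h
    · exact hS₂ h
  have hTo : IsOpen (⋂ A ∈ (S ∪ s₂.erase O₂ : Finset (Set X)), (U ∩ U₂) • A) := by
    refine isOpen_biInter_finset fun A hA => nuf_smul_open _ ?_
    rcases Finset.mem_union.1 hA with h | h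
    · exact (p.2.1.1 A (hSsub h)).1
    · exact (p.2.1.1 A (hS₂ h)).1
  rcases hd _ hTo hT with ⟨z, hzT, hzO⟩
  have hzmem : ∀ A ∈ (S ∪ s₂.erase O₂ : Finset (Set X)), z ∈ (U ∩ U₂) • A :=
    fun A hA => Set.mem_iInter₂.1 hzT A hA
  rcases hzO with hz1 | hz2
  · refine ⟨z, hz1, Set.mem_iInter₂.2 fun A hA => ?_⟩
    have := hzmem A (Finset.mem_union_left _ hA)
    exact Set.smul_subset_smul_right Set.inter_subset_left this
  · exfalso
    have : z ∈ ⋂ A ∈ s₂, U₂ • A := by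
      refine Set.mem_iInter₂.2 fun A hA => ?_
      by_cases hAO : A = O₂
      · subst hAO
        simpa using Set.smul_mem_smul hU₂1 hz2
      · have := hzmem A (Finset.mem_union_right _ (Finset.mem_erase.2 ⟨hAO, hA⟩))
        exact Set.smul_subset_smul_right Set.inter_subset_right this
    rw [hbad] at this; exact this

end Aux

section Aux2
variable {G X Y : Type*} [Group G] [TopologicalSpace G] [IsTopologicalGroup G]
  [TopologicalSpace X] [CompactSpace X] [T2Space X] [MulAction G X] [ContinuousSMul G X]
  [TopologicalSpace Y] [CompactSpace Y] [T2Space Y] [MulAction G Y] [ContinuousSMul G Y]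

/-- closed thickened finite-intersection sets in `Y`. -/
def nufZ (φ : Y → X) (S : Finset (Set X)) (U : Set G) : Set Y :=
  closure (⋂ A ∈ S, U • (φ ⁻¹' A))

/-- index type for the defining family of `nufM`. -/
def nufIdx (G : Type*) {X : Type*} [Group G] [TopologicalSpace G] [TopologicalSpace X]
    [MulAction G X] (p : NearUltra G X) : Type _ :=
  {SU : Finset (Set X) × Set G //
    ↑SU.1 ⊆ p.1 ∧ IsOpen SU.2 ∧ (1:G) ∈ SU.2 ∧ SU.2⁻¹ = SU.2}

/-- the compact set of "limits of fibers" associated to a near ultrafilter. -/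
def nufM (φ : Y → X) (p : NearUltra G X) : Set Y :=
  ⋂ i : nufIdx G p, nufZ φ i.1.1 i.1.2

lemma mem_nufM {φ : Y → X} {p : NearUltra G X} {y : Y} :
    y ∈ nufM φ p ↔ ∀ S : Finset (Set X), ↑S ⊆ p.1 → ∀ U : Set G,
      IsOpen U → (1:G) ∈ U → U⁻¹ = U → y ∈ nufZ φ S U := by
  constructor
  · intro h S hS U h1 h2 h3
    exact Set.mem_iInter.1 h ⟨(S, U), hS, h1, h2, h3⟩
  · intro h
    exact Set.mem_iInter.2 fun i => h i.1.1 i.2.1 i.1.2 i.2.2.1 i.2.2.2.1 i.2.2.2.2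

lemma nuf_smul_preimage_mem {φ : Y → X} (hequiv : ∀ (g : G) (y : Y), φ (g • y) = g • φ y)
    {U : Set G} {A : Set X} {y : Y} (hy : φ y ∈ U • A) : y ∈ U • (φ ⁻¹' A) := by
  rcases Set.mem_smul.1 hy with ⟨u, hu, a, ha, hua⟩
  have hmem : u⁻¹ • y ∈ φ ⁻¹' A := by
    have : φ (u⁻¹ • y) = u⁻¹ • φ y := hequiv _ _
    rw [Set.mem_preimage, this, ← hua, inv_smul_smul]
    exact ha
  have := Set.smul_mem_smul hu hmem
  rwa [smul_inv_smul] at this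

lemma nuf_smul_image_mem {φ : Y → X} (hequiv : ∀ (g : G) (y : Y), φ (g • y) = g • φ y)
    {U : Set G} {A : Set X} {y : Y} (hy : y ∈ U • (φ ⁻¹' A)) : φ y ∈ U • A := by
  rcases Set.mem_smul.1 hy with ⟨u, hu, b, hb, rfl⟩
  rw [hequiv]
  exact Set.smul_mem_smul hu hb

lemma nufM_nonempty {φ : Y → X} (hequiv : ∀ (g : G) (y : Y), φ (g • y) = g • φ y)
    (hsurj : Function.Surjective φ) (hX : Nonempty X) (p : NearUltra G X) :
    (nufM φ p).Nonempty := by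
  classical
  by_contra h
  rw [Set.not_nonempty_iff_eq_empty] at h
  have hdisj : (Set.univ : Set Y) ∩ ⋂ i : nufIdx G p, nufZ φ i.1.1 i.1.2 = ∅ := by
    rw [Set.univ_inter]; exact h
  rcases isCompact_univ.elim_finite_subfamily_closed _ (fun _ => isClosed_closure) hdisj
    with ⟨t, ht⟩
  set Sm : Finset (Set X) := t.sup (fun i => i.1.1) with hSm
  set Um : Set G := ⋂ i ∈ t, i.1.2 with hUm
  have hUmo : IsOpen Um := isOpen_biInter_finset fun i _ => i.2.2.1
  have hUm1 : (1:G) ∈ Um := Set.mem_iInter₂.2 fun i _ => i.2.2.2.1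
  have hUms : Um⁻¹ = Um := by
    ext u
    simp only [Set.mem_inv, hUm, Set.mem_iInter]
    refine forall₂_congr fun i hi => ?_
    conv_rhs => rw [← i.2.2.2.2]
    exact (Set.mem_inv).symm
  have hSsub : ↑Sm ⊆ p.1 := by
    intro A hA
    rcases Finset.mem_sup.1 (by exact_mod_cast hA) with ⟨i, hi, hAi⟩
    exact i.2.1 hAi
  have key : ∃ y : Y, ∀ A ∈ Sm, y ∈ Um • (φ ⁻¹' A) := by
    rcases Sm.eq_empty_or_nonempty with he | hne
    · rcases hsurj (Classical.arbitrary X) with ⟨y, _⟩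
      exact ⟨y, fun A hA => absurd (he ▸ hA) (Finset.notMem_empty A)⟩
    · rcases p.2.1.2 Sm hne hSsub Um hUmo hUm1 hUms with ⟨x, hx⟩
      rcases hsurj x with ⟨y, hy⟩
      refine ⟨y, fun A hA => ?_⟩
      refine nuf_smul_preimage_mem hequiv ?_
      rw [hy]
      exact Set.mem_iInter₂.1 hx A hA
  rcases key with ⟨y, hy⟩
  have : y ∈ (Set.univ : Set Y) ∩ ⋂ i ∈ t, nufZ φ i.1.1 i.1.2 := by
    refine ⟨trivial, Set.mem_iInter₂.2 fun i hi => ?_⟩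
    refine subset_closure (Set.mem_iInter₂.2 fun A hA => ?_)
    have hASm : A ∈ Sm := (Finset.le_sup (f := fun i : nufIdx G p => i.1.1) hi) hA
    exact Set.smul_subset_smul_right (Set.biInter_subset_of_mem hi) (hy A hASm)
  simp only [nufZ] at this
  rw [ht] at this
  exact this

end Aux2

section Aux3
variable {G X Y : Type*} [Group G] [TopologicalSpace G] [IsTopologicalGroup G]
  [TopologicalSpace X] [CompactSpace X] [T2Space X] [MulAction G X] [ContinuousSMul G X]
  [TopologicalSpace Y] [CompactSpace Y] [T2Space Y] [MulAction G Y] [ContinuousSMul G Y]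

lemma nufZ_singleton {φ : Y → X} (A : Set X) (U : Set G) :
    nufZ φ {A} U = closure (U • (φ ⁻¹' A)) := by
  simp [nufZ]

lemma nufM_phi {φ : Y → X} (hcont : Continuous φ)
    (hequiv : ∀ (g : G) (y : Y), φ (g • y) = g • φ y)
    (π : NearUltra G X → X)
    (hπ : ∀ p : NearUltra G X, ∀ A : Set X, IsOpen A → π p ∈ A → A ∈ p.1)
    {p : NearUltra G X} {y : Y} (hy : y ∈ nufM φ p) : φ y = π p := by
  by_contra hne
  rcases t2_separation (fun h : π p = φ y => hne h.symm) with ⟨V, W, hV, hW, hπV, hφW, hdisj⟩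
  have hnotcl : φ y ∉ closure V := by
    intro hmem
    have : closure V ⊆ Wᶜ :=
      closure_minimal (fun x hx => Set.disjoint_left.1 hdisj hx) hW.isClosed_compl
    exact this hmem hφW
  rcases nuf_avoid (G := G) hnotcl with ⟨U, hUo, hU1, hUs, havoid⟩
  have hVp : V ∈ p.1 := hπ p V hV hπV
  have hyZ : y ∈ nufZ φ {V} U := by
    refine mem_nufM.1 hy {V} ?_ U hUo hU1 hUs
    simpa using hVp
  rw [nufZ_singleton] at hyZ
  have : φ y ∈ closure (U • V) := by
    have h1 : φ y ∈ φ '' closure (U • (φ ⁻¹' V)) := ⟨y, hyZ, rfl⟩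
    have h2 : φ '' closure (U • (φ ⁻¹' V)) ⊆ closure (φ '' (U • (φ ⁻¹' V))) :=
      image_closure_subset_closure_image hcont
    refine closure_mono ?_ (h2 h1)
    rintro _ ⟨z, hz, rfl⟩
    exact nuf_smul_image_mem hequiv hz
  exact havoid this

lemma nufM_subsingleton {φ : Y → X} (hcont : Continuous φ)
    (hequiv : ∀ (g : G) (y : Y), φ (g • y) = g • φ y)
    (hsurj : Function.Surjective φ)
    (hhp : ∀ W : Set Y, IsOpen W → W.Nonempty → ∃ x : X, φ ⁻¹' {x} ⊆ W)
    {p : NearUltra G X} {y₁ y₂ : Y} (h₁ : y₁ ∈ nufM φ p) (h₂ : y₂ ∈ nufM φ p) :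
    y₁ = y₂ := by
  classical
  by_contra hne
  rcases t2_separation hne with ⟨V, W, hV, hW, hy₁V, hy₂W, hdisj⟩
  have hnotcl : y₂ ∉ closure V := by
    intro hmem
    have : closure V ⊆ Wᶜ :=
      closure_minimal (fun x hx => Set.disjoint_left.1 hdisj hx) hW.isClosed_compl
    exact this hmem hy₂W
  rcases nuf_avoid (G := G) hnotcl with ⟨U₄, hU₄o, hU₄1, hU₄s, havoid⟩
  set A₀ : Set X := (φ '' Vᶜ)ᶜ with hA₀
  have hA₀o : IsOpen A₀ :=
    ((hV.isClosed_compl.isCompact).image hcont).isClosed.isOpen_compl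
  have hfib : φ ⁻¹' A₀ ⊆ V := by
    intro z hz
    by_contra hzV
    exact hz ⟨z, hzV, rfl⟩
  have hA₀ne : A₀.Nonempty := by
    rcases hhp V hV ⟨y₁, hy₁V⟩ with ⟨x, hxf⟩
    refine ⟨x, ?_⟩
    rintro ⟨z, hzV, hzx⟩
    exact hzV (hxf (by simp [hzx]))
  have hA₀p : A₀ ∈ p.1 := by
    refine nuf_ins p hA₀o hA₀ne ?_
    intro S hS U hUo hU1 hUs
    have hy₁Z : y₁ ∈ nufZ φ S U := mem_nufM.1 h₁ S hS U hUo hU1 hUs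
    have hW'ne : (V ∩ ⋂ A ∈ S, U • (φ ⁻¹' A)).Nonempty :=
      mem_closure_iff.1 hy₁Z V hV hy₁V
    have hW'o : IsOpen (V ∩ ⋂ A ∈ S, U • (φ ⁻¹' A)) := by
      refine hV.inter (isOpen_biInter_finset fun A hA => nuf_smul_open _ ?_)
      exact (p.2.1.1 A (hS hA)).1.preimage hcont
    rcases hhp _ hW'o hW'ne with ⟨x', hx'f⟩
    have hx'A₀ : x' ∈ A₀ := by
      rintro ⟨z, hzV, hzx⟩
      exact hzV ((hx'f (by simp [hzx])).1)
    refine ⟨x', hx'A₀, Set.mem_iInter₂.2 fun A hA => ?_⟩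
    rcases hsurj x' with ⟨z, hz⟩
    have hzW : z ∈ V ∩ ⋂ B ∈ S, U • (φ ⁻¹' B) := hx'f (by simp [hz])
    have : z ∈ U • (φ ⁻¹' A) := Set.mem_iInter₂.1 hzW.2 A hA
    have := nuf_smul_image_mem hequiv this
    rwa [hz] at this
  have hy₂Z : y₂ ∈ nufZ φ {A₀} U₄ := by
    refine mem_nufM.1 h₂ {A₀} ?_ U₄ hU₄o hU₄1 hU₄s
    simpa using hA₀p
  rw [nufZ_singleton] at hy₂Z
  exact havoid (closure_mono (Set.smul_subset_smul_left hfib) hy₂Z)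

end Aux3

section Aux4
variable {G X Y : Type*} [Group G] [TopologicalSpace G] [IsTopologicalGroup G]
  [TopologicalSpace X] [CompactSpace X] [T2Space X] [MulAction G X] [ContinuousSMul G X]
  [TopologicalSpace Y] [CompactSpace Y] [T2Space Y] [MulAction G Y] [ContinuousSMul G Y]

lemma nufM_smul_mem {φ : Y → X} (hequiv : ∀ (g : G) (y : Y), φ (g • y) = g • φ y)
    (g : G) (p : NearUltra G X) (hact : IsNearUltrafilter G {A : Set X | g⁻¹ • A ∈ p.1})
    {y : Y} (hy : y ∈ nufM φ p) :
    g • y ∈ nufM φ (⟨{A : Set X | g⁻¹ • A ∈ p.1}, hact⟩ : NearUltra G X) := by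
  classical
  refine mem_nufM.2 ?_
  intro S hS U hUo hU1 hUs
  set U' : Set G := (fun u => g⁻¹ * u * g) '' U with hU'
  have hU'o : IsOpen U' := by
    have hpre : U' = (fun u => g * u * g⁻¹) ⁻¹' U := by
      ext u
      constructor
      · rintro ⟨v, hv, rfl⟩
        have : g * (g⁻¹ * v * g) * g⁻¹ = v := by group
        simpa [this] using hv
      · intro hu
        exact ⟨g * u * g⁻¹, hu, by group⟩
    rw [hpre]
    exact hUo.preimage ((continuous_const.mul continuous_id).mul continuous_const)
  have hU'1 : (1:G) ∈ U' := ⟨1, hU1, by group⟩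
  have hU's : U'⁻¹ = U' := by
    ext u
    simp only [Set.mem_inv, hU', Set.mem_image]
    constructor
    · rintro ⟨v, hv, hveq⟩
      refine ⟨v⁻¹, ?_, ?_⟩
      · rw [← hUs]; exact Set.mem_inv.2 (by simpa using hv)
      · have : u = (g⁻¹ * v * g)⁻¹ := by rw [hveq]; group
        rw [this]; group
    · rintro ⟨v, hv, rfl⟩
      refine ⟨v⁻¹, ?_, ?_⟩
      · rw [← hUs]; exact Set.mem_inv.2 (by simpa using hv)
      · group
  have C1 : ∀ (A : Set X) (z : Y),
      g • z ∈ U • (φ ⁻¹' A) ↔ z ∈ U' • (φ ⁻¹' (g⁻¹ • A)) := by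
    intro A z
    constructor
    · intro hz
      rcases Set.mem_smul.1 hz with ⟨u, hu, b, hb, hub⟩
      refine Set.mem_smul.2 ⟨g⁻¹ * u * g, ⟨u, hu, rfl⟩, g⁻¹ • b, ?_, ?_⟩
      · rw [Set.mem_preimage, hequiv]
        exact Set.smul_mem_smul_set hb
      · have h1 : (g⁻¹ * u * g) • (g⁻¹ • b) = g⁻¹ • (u • b) := by
          rw [smul_smul, smul_smul]; congr 1; group
        rw [h1, hub, inv_smul_smul]
    · intro hz
      rcases Set.mem_smul.1 hz with ⟨u', ⟨u, hu, rfl⟩, c, hc, huc⟩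
      refine Set.mem_smul.2 ⟨u, hu, g • c, ?_, ?_⟩
      · have h2 : φ (g • c) = g • φ c := hequiv _ _
        rw [Set.mem_preimage, h2]
        have h3 := Set.mem_smul_set_iff_inv_smul_mem.1 hc
        rwa [inv_inv] at h3
      · have h1 : u • (g • c) = g • ((g⁻¹ * u * g) • c) := by
          rw [smul_smul, smul_smul]; congr 1; group
        rw [h1, huc]
  have hset : (g⁻¹ : G) • (⋂ A ∈ S, U • (φ ⁻¹' A)) = ⋂ A ∈ S, U' • (φ ⁻¹' (g⁻¹ • A)) := by
    ext z
    rw [Set.mem_smul_set_iff_inv_smul_mem, inv_inv]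
    simp only [Set.mem_iInter]
    exact forall₂_congr fun A hA => C1 A z
  have hS' : ↑(S.image (fun A => g⁻¹ • A)) ⊆ p.1 := by
    intro B hB
    rcases Finset.mem_image.1 (by exact_mod_cast hB) with ⟨A, hA, rfl⟩
    exact hS hA
  have hyZ : y ∈ nufZ φ (S.image (fun A => g⁻¹ • A)) U' :=
    mem_nufM.1 hy _ hS' U' hU'o hU'1 hU's
  have himg : ⋂ B ∈ S.image (fun A => g⁻¹ • A), U' • (φ ⁻¹' B)
      = ⋂ A ∈ S, U' • (φ ⁻¹' (g⁻¹ • A)) := by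
    ext z
    simp only [Set.mem_iInter, Finset.mem_image]
    constructor
    · intro h A hA
      exact h _ ⟨A, hA, rfl⟩
    · rintro h B ⟨A, hA, rfl⟩
      exact h A hA
  have hy2 : y ∈ closure ((g⁻¹ : G) • (⋂ A ∈ S, U • (φ ⁻¹' A))) := by
    rw [hset, ← himg]
    exact hyZ
  rw [closure_smul] at hy2
  show g • y ∈ closure (⋂ A ∈ S, U • (φ ⁻¹' A))
  rw [← inv_inv g, ← Set.mem_smul_set_iff_inv_smul_mem]
  exact hy2

end Aux4

/-- The canonical map from the space of near ultrafilters is the universal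
highly proximal extension: every highly proximal extension of X factors it. -/
theorem nearUltra_universal_highlyProximal
    {G X Y : Type*} [Group G] [TopologicalSpace G] [IsTopologicalGroup G]
    [TopologicalSpace X] [CompactSpace X] [T2Space X]
    [MulAction G X] [ContinuousSMul G X]
    [TopologicalSpace Y] [CompactSpace Y] [T2Space Y]
    [MulAction G Y] [ContinuousSMul G Y]
    (hminX : ∀ x : X, Dense (MulAction.orbit G x))
    (hminY : ∀ y : Y, Dense (MulAction.orbit G y))
    (hact : ∀ (g : G) (p : NearUltra G X),
      IsNearUltrafilter G {A : Set X | g⁻¹ • A ∈ p.1})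
    (π : NearUltra G X → X)
    (hπ : ∀ p : NearUltra G X, ∀ A : Set X, IsOpen A → π p ∈ A → A ∈ p.1)
    (φ : Y → X) (hcont : Continuous φ)
    (hequiv : ∀ (g : G) (y : Y), φ (g • y) = g • φ y)
    (hsurj : Function.Surjective φ)
    (hhp : ∀ W : Set Y, IsOpen W → W.Nonempty → ∃ x : X, φ ⁻¹' {x} ⊆ W) :
    ∃ ψ : NearUltra G X → Y,
      @Continuous (NearUltra G X) Y (nearTopology G X) _ ψ ∧
      (∀ (g : G) (p : NearUltra G X),
        ψ ⟨{A : Set X | g⁻¹ • A ∈ p.1}, hact g p⟩ = g • ψ p) ∧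
      (∀ p : NearUltra G X, φ (ψ p) = π p) := by
  classical
  letI : TopologicalSpace (NearUltra G X) := nearTopology G X
  have hMne : ∀ p : NearUltra G X, (nufM φ p).Nonempty := fun p =>
    nufM_nonempty hequiv hsurj ⟨π p⟩ p
  choose ψ hψ using hMne
  have hval : ∀ p, φ (ψ p) = π p := fun p => nufM_phi hcont hequiv π hπ (hψ p)
  have huniq : ∀ (p : NearUltra G X) (y : Y), y ∈ nufM φ p → y = ψ p := fun p y hy =>
    nufM_subsingleton hcont hequiv hsurj hhp hy (hψ p)
  refine ⟨ψ, ?_, ?_, hval⟩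
  · -- continuity
    refine continuous_def.mpr ?_
    intro O hO
    rw [isOpen_iff_forall_mem_open]
    intro p hp
    have hdisj : (Oᶜ) ∩ ⋂ i : nufIdx G p, nufZ φ i.1.1 i.1.2 = ∅ := by
      ext y
      simp only [Set.mem_inter_iff, Set.mem_empty_iff_false, iff_false, not_and]
      intro hyc hyM
      exact hyc ((huniq p y hyM) ▸ hp)
    rcases (hO.isClosed_compl.isCompact).elim_finite_subfamily_closed _
      (fun _ => isClosed_closure) hdisj with ⟨t, ht⟩
    set Sm : Finset (Set X) := t.sup (fun i => i.1.1) with hSm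
    set Um : Set G := ⋂ i ∈ t, i.1.2 with hUm
    have hUmo : IsOpen Um := isOpen_biInter_finset fun i _ => i.2.2.1
    have hUm1 : (1:G) ∈ Um := Set.mem_iInter₂.2 fun i _ => i.2.2.2.1
    have hSsub : ↑Sm ⊆ p.1 := by
      intro A hA
      rcases Finset.mem_sup.1 (by exact_mod_cast hA) with ⟨i, hi, hAi⟩
      exact i.2.1 hAi
    have hsubO : closure (⋂ A ∈ Sm, Um • (φ ⁻¹' A)) ⊆ O := by
      intro y hy
      by_contra hyO
      have hmem : y ∈ (Oᶜ) ∩ ⋂ i ∈ t, closure (⋂ A ∈ i.1.1, i.1.2 • (φ ⁻¹' A)) := by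
        refine ⟨hyO, Set.mem_iInter₂.2 fun i hi => ?_⟩
        show y ∈ closure (⋂ A ∈ i.1.1, i.1.2 • (φ ⁻¹' A))
        refine closure_mono ?_ hy
        intro z hz
        refine Set.mem_iInter₂.2 fun A hA => ?_
        have hASm : A ∈ Sm := (Finset.le_sup (f := fun i : nufIdx G p => i.1.1) hi) hA
        exact Set.smul_subset_smul_right (Set.biInter_subset_of_mem hi)
          (Set.mem_iInter₂.1 hz A hASm)
      rw [ht] at hmem
      exact hmem
    rcases exists_open_nhds_one_mul_subset (hUmo.mem_nhds hUm1) with ⟨V₁, hV₁o, hV₁1, hV₁m⟩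
    set U₁ : Set G := V₁ ∩ V₁⁻¹ with hU₁
    have hU₁o : IsOpen U₁ := hV₁o.inter hV₁o.inv
    have hU₁1 : (1:G) ∈ U₁ := ⟨hV₁1, by simpa using hV₁1⟩
    have hU₁s : U₁⁻¹ = U₁ := by ext u; simp [hU₁, and_comm]
    have hmul : ∀ a ∈ U₁, ∀ b ∈ U₁, a * b ∈ Um := fun a ha b hb =>
      hV₁m (Set.mul_mem_mul ha.1 hb.1)
    set E : Set X → Set X := fun A => (closure (U₁ • A))ᶜ with hE
    refine ⟨⋂ A ∈ Sm, {q : NearUltra G X | E A ∉ q.1}, ?_, ?_, ?_⟩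
    · -- the neighborhood is contained in ψ ⁻¹' O
      intro q hq
      have hmemq : ∀ A ∈ Sm, U₁ • A ∈ q.1 := by
        intro A hA
        have hAp := p.2.1.1 A (hSsub hA)
        have hO₁o : IsOpen (U₁ • A) := nuf_smul_open _ hAp.1
        have hO₁ne : (U₁ • A).Nonempty :=
          ⟨(1:G) • hAp.2.choose, Set.smul_mem_smul hU₁1 hAp.2.choose_spec⟩
        have hqA : E A ∉ q.1 := Set.mem_iInter₂.1 hq A hA
        by_cases hEne : (E A).Nonempty
        · refine nuf_dich q hO₁o hO₁ne isClosed_closure.isOpen_compl hEne ?_ hqA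
          intro T hTo hTne
          by_cases hTE : (T ∩ E A).Nonempty
          · rcases hTE with ⟨z, h1, h2⟩
            exact ⟨z, h1, Or.inr h2⟩
          · rw [Set.not_nonempty_iff_eq_empty] at hTE
            have hTsub : T ⊆ closure (U₁ • A) := by
              intro z hz
              by_contra hcl
              exact (Set.eq_empty_iff_forall_notMem.1 hTE z) ⟨hz, hcl⟩
            rcases hTne with ⟨t₀, ht₀⟩
            rcases mem_closure_iff.1 (hTsub ht₀) T hTo ht₀ with ⟨z, hzT, hzU⟩
            exact ⟨z, hzT, Or.inl hzU⟩
        · rw [Set.not_nonempty_iff_eq_empty] at hEne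
          have hdense : closure (U₁ • A) = Set.univ := by
            have := Set.compl_empty_iff.1 hEne
            exact this
          refine nuf_ins q hO₁o hO₁ne ?_
          intro S hSq U hUo hU1' hUs'
          have hTne : (⋂ A' ∈ S, U • A').Nonempty :=
            nuf_biInter_nonempty q S hSq ⟨π p⟩ hUo hU1' hUs'
          have hTo : IsOpen (⋂ A' ∈ S, U • A') :=
            isOpen_biInter_finset fun A' hA' => nuf_smul_open _ (q.2.1.1 A' (hSq hA')).1
          rcases hTne with ⟨t₀, ht₀⟩
          have ht₀' : t₀ ∈ closure (U₁ • A) := by rw [hdense]; trivial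
          rcases mem_closure_iff.1 ht₀' _ hTo ht₀ with ⟨z, hz1, hz2⟩
          exact ⟨z, hz2, hz1⟩
      have hj : ↑(Sm.image (fun A => U₁ • A)) ⊆ q.1 := by
        intro B hB
        rcases Finset.mem_image.1 (by exact_mod_cast hB) with ⟨A, hA, rfl⟩
        exact hmemq A hA
      have hq1 : ψ q ∈ nufZ φ (Sm.image (fun A => U₁ • A)) U₁ :=
        mem_nufM.1 (hψ q) _ hj U₁ hU₁o hU₁1 hU₁s
      have hsub2 : ⋂ B ∈ Sm.image (fun A => U₁ • A), U₁ • (φ ⁻¹' B)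
          ⊆ ⋂ A ∈ Sm, Um • (φ ⁻¹' A) := by
        intro z hz
        refine Set.mem_iInter₂.2 fun A hA => ?_
        have hzB : z ∈ U₁ • (φ ⁻¹' (U₁ • A)) :=
          Set.mem_iInter₂.1 hz _ (Finset.mem_image_of_mem _ hA)
        rcases Set.mem_smul.1 hzB with ⟨u₁, hu₁, w, hw, rfl⟩
        have hw2 : w ∈ U₁ • (φ ⁻¹' A) := nuf_smul_preimage_mem hequiv hw
        rcases Set.mem_smul.1 hw2 with ⟨u₂, hu₂, b, hb, rfl⟩
        have heq : u₁ • u₂ • b = (u₁ * u₂) • b := (mul_smul _ _ _).symm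
        rw [heq]
        exact Set.smul_mem_smul (hmul _ hu₁ _ hu₂) hb
      exact hsubO (closure_mono hsub2 hq1)
    · -- the neighborhood is open
      refine isOpen_biInter_finset fun A _ => ?_
      by_cases hEne : (E A).Nonempty
      · exact TopologicalSpace.isOpen_generateFrom_of_mem
          ⟨E A, isClosed_closure.isOpen_compl, hEne, rfl⟩
      · have huniv : {q : NearUltra G X | E A ∉ q.1} = Set.univ := by
          rw [Set.not_nonempty_iff_eq_empty] at hEne
          ext q
          simp only [Set.mem_setOf_eq, Set.mem_univ, iff_true]
          rw [hEne]
          intro hq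
          exact Set.not_nonempty_empty (q.2.1.1 _ hq).2
        rw [huniv]
        exact isOpen_univ
    · -- p belongs to the neighborhood
      refine Set.mem_iInter₂.2 fun A hA => ?_
      intro hEp
      rcases exists_open_nhds_one_mul_subset (hU₁o.mem_nhds hU₁1) with ⟨V₅, hV₅o, hV₅1, hV₅m⟩
      set U₅ : Set G := V₅ ∩ V₅⁻¹ with hU₅
      have hU₅o : IsOpen U₅ := hV₅o.inter hV₅o.inv
      have hU₅1 : (1:G) ∈ U₅ := ⟨hV₅1, by simpa using hV₅1⟩
      have hU₅s : U₅⁻¹ = U₅ := by ext u; simp [hU₅, and_comm]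
      have hs : ↑({A, E A} : Finset (Set X)) ⊆ p.1 := by
        intro B hB
        simp only [Finset.coe_insert, Finset.coe_singleton, Set.mem_insert_iff,
          Set.mem_singleton_iff] at hB
        rcases hB with rfl | rfl
        · exact hSsub hA
        · exact hEp
      rcases p.2.1.2 {A, E A} ⟨A, by simp⟩ hs U₅ hU₅o hU₅1 hU₅s with ⟨x, hx⟩
      have hx1 : x ∈ U₅ • A := Set.mem_iInter₂.1 hx A (by simp)
      have hx2 : x ∈ U₅ • E A := Set.mem_iInter₂.1 hx (E A) (by simp)
      rcases Set.mem_smul.1 hx1 with ⟨u, hu, a, ha, hua⟩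
      rcases Set.mem_smul.1 hx2 with ⟨u', hu', e, he, hue⟩
      have hu'i : u'⁻¹ ∈ U₅ := by
        rw [← hU₅s]; exact Set.mem_inv.2 (by simpa using hu')
      have hecl : e ∈ closure (U₁ • A) := by
        have heq : e = (u'⁻¹ * u) • a := by
          have h1 : e = u'⁻¹ • x := by rw [← hue, inv_smul_smul]
          rw [h1, ← hua, smul_smul]
        rw [heq]
        exact subset_closure (Set.smul_mem_smul (hV₅m (Set.mul_mem_mul hu'i.1 hu.1)) ha)
      exact he hecl
  · -- equivariance
    intro g p
    exact (huniq _ _ (nufM_smul_mem hequiv g p (hact g p) (hψ p))).symm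
end
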